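/- arXiv:2304.08011 — 2 statements merged into one kernel-verified Lean document; each statement's English description precedes it below -/
import Mathlib

section
/- Let K be a field, n, r > 1, and let N = N_{n,r} be the quotient of the path algebra of the cyclic quiver with n vertices (arrows x: i → i+1 mod n) by the ideal generated by all paths of length r. Let 1 ≤ s ≤ n with s + r ≤ n + 1, and let e = e_1 + ⋯ + e_s be the sum of the first s vertex idempotents. Then eNe is isomorphic as a K-algebra to A(s,r), the quotient of the path algebra of the linear quiver 1 → 2 → ⋯ → s by the ideal generated by all paths of length r. -/
noncomputable section

variable (K : Type) [Field K]

/-! ### The selfinjective Nakayama algebra `N_{n,r}`: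
the path algebra of the cyclic quiver on `n` vertices modulo all paths of
length `r`, presented as a quotient of the free algebra on generators
`ε i` (trivial paths) and `a i` (arrow `i → i+1`). -/

/-- Trivial path at vertex `i` of the cyclic quiver. -/
def cyE (n : ℕ) (i : ZMod n) : FreeAlgebra K (ZMod n ⊕ ZMod n) :=
  FreeAlgebra.ι K (Sum.inl i)

/-- The arrow `i → i + 1` of the cyclic quiver. -/
def cyA (n : ℕ) (i : ZMod n) : FreeAlgebra K (ZMod n ⊕ ZMod n) :=
  FreeAlgebra.ι K (Sum.inr i)

/-- Defining relations of `N_{n,r}`. -/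
def cycRels (n r : ℕ) [NeZero n] : Set (FreeAlgebra K (ZMod n ⊕ ZMod n)) :=
  {x | ∃ i, x = cyE K n i * cyE K n i - cyE K n i} ∪
  {x | ∃ i j, i ≠ j ∧ x = cyE K n i * cyE K n j} ∪
  {(∑ i : ZMod n, cyE K n i) - 1} ∪
  {x | ∃ i, x = cyE K n i * cyA K n i - cyA K n i} ∪
  {x | ∃ i, x = cyA K n i * cyE K n (i + 1) - cyA K n i} ∪
  {x | ∃ i : ZMod n, x = ((List.range r).map (fun k => cyA K n (i + (k : ZMod n)))).prod}

/-- The selfinjective Nakayama algebra `N_{n,r}`. -/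
def Nalg (n r : ℕ) [NeZero n] : Type :=
  RingQuot (fun a b : FreeAlgebra K (ZMod n ⊕ ZMod n) => a ∈ cycRels K n r ∧ b = 0)

instance (n r : ℕ) [NeZero n] : Ring (Nalg K n r) := by unfold Nalg; infer_instance
instance (n r : ℕ) [NeZero n] : Algebra K (Nalg K n r) := by unfold Nalg; infer_instance

/-- The canonical projection onto `N_{n,r}`. -/
def NalgMk (n r : ℕ) [NeZero n] :
    FreeAlgebra K (ZMod n ⊕ ZMod n) →ₐ[K] Nalg K n r :=
  RingQuot.mkAlgHom K _

/-! ### The algebra `A(s,r) = K(linear Aₛ quiver)/rad^r`: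
generators `lE i` (trivial paths, `i : Fin s`) and `lA i` (arrow `i → i+1`;
the symbol `lA i` with `i.1 + 1 = s` does not correspond to an arrow and is
set to zero). -/

/-- Trivial path at vertex `i` of the linear quiver. -/
def lE (s : ℕ) (i : Fin s) : FreeAlgebra K (Fin s ⊕ Fin s) :=
  FreeAlgebra.ι K (Sum.inl i)

/-- The arrow `i → i + 1` of the linear quiver (zero if `i` is the last vertex). -/
def lA (s : ℕ) (i : Fin s) : FreeAlgebra K (Fin s ⊕ Fin s) :=
  FreeAlgebra.ι K (Sum.inr i)

open Fin.NatCast in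
/-- Defining relations of `A(s,r)`. -/
def linRels (s r : ℕ) [NeZero s] : Set (FreeAlgebra K (Fin s ⊕ Fin s)) :=
  {x | ∃ i, x = lE K s i * lE K s i - lE K s i} ∪
  {x | ∃ i j, i ≠ j ∧ x = lE K s i * lE K s j} ∪
  {(∑ i : Fin s, lE K s i) - 1} ∪
  {x | ∃ i : Fin s, (i : ℕ) + 1 = s ∧ x = lA K s i} ∪
  {x | ∃ i, x = lE K s i * lA K s i - lA K s i} ∪
  {x | ∃ i, x = lA K s i * lE K s (i + 1) - lA K s i} ∪
  {x | ∃ i : Fin s, x = ((List.range r).map (fun k => lA K s (i + (k : Fin s)))).prod}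

/-- The algebra `A(s,r)`, the path algebra of the linearly oriented `Aₛ`
quiver modulo all paths of length `r`. -/
def Aalg (s r : ℕ) [NeZero s] : Type :=
  RingQuot (fun a b : FreeAlgebra K (Fin s ⊕ Fin s) => a ∈ linRels K s r ∧ b = 0)

instance (s r : ℕ) [NeZero s] : Ring (Aalg K s r) := by unfold Aalg; infer_instance
instance (s r : ℕ) [NeZero s] : Algebra K (Aalg K s r) := by unfold Aalg; infer_instance

/-- The idempotent `e = e₁ + ⋯ + e_s` of `N_{n,r}` (sum of the first `s`
vertex idempotents). -/
def cornerIdem (n r s : ℕ) [NeZero n] : Nalg K n r :=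
  ∑ i ∈ Finset.range s, NalgMk K n r (cyE K n (i : ZMod n))
namespace CornerProof
open Fin.NatCast Fin.CommRing
variable {K : Type} [Field K] {n r : ℕ} [NeZero n]

def εN (K : Type) [Field K] (n r : ℕ) [NeZero n] (i : ZMod n) : Nalg K n r :=
  NalgMk K n r (cyE K n i)

def αN (K : Type) [Field K] (n r : ℕ) [NeZero n] (i : ZMod n) : Nalg K n r :=
  NalgMk K n r (cyA K n i)

lemma castListN (i : ZMod n) (l : ℕ) :
    (List.map (fun k => cyA K n (i + k)) (do let a ← List.range l; pure ((a : ZMod n)))) =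
      (List.range l).map (fun k : ℕ => cyA K n (i + (k : ZMod n))) := by
  induction l with
  | zero => rfl
  | succ l ih => rw [List.range_succ]; simp_all

def arrN (K : Type) [Field K] (n r : ℕ) [NeZero n] (i : ZMod n) (l : ℕ) : Nalg K n r :=
  NalgMk K n r (((List.range l).map (fun k : ℕ => cyA K n (i + (k : ZMod n)))).prod)

def pN (K : Type) [Field K] (n r : ℕ) [NeZero n] (i : ZMod n) (l : ℕ) : Nalg K n r :=
  εN K n r i * arrN K n r i l

lemma relN_zero (x : FreeAlgebra K (ZMod n ⊕ ZMod n)) (hx : x ∈ cycRels K n r) :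
    NalgMk K n r x = 0 := by
  have h := RingQuot.mkAlgHom_rel K
    (s := fun a b : FreeAlgebra K (ZMod n ⊕ ZMod n) => a ∈ cycRels K n r ∧ b = 0)
    (x := x) (y := 0) ⟨hx, rfl⟩
  rw [map_zero] at h
  exact h

lemma εN_mul_self (i : ZMod n) : εN K n r i * εN K n r i = εN K n r i := by
  have h := relN_zero (K := K) (n := n) (r := r) _
    (Or.inl (Or.inl (Or.inl (Or.inl (Or.inl ⟨i, rfl⟩)))))
  rw [map_sub, map_mul, sub_eq_zero] at h
  exact h

lemma εN_mul_εN {i j : ZMod n} (hij : i ≠ j) : εN K n r i * εN K n r j = 0 := by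
  have h := relN_zero (K := K) (n := n) (r := r) _
    (Or.inl (Or.inl (Or.inl (Or.inl (Or.inr ⟨i, j, hij, rfl⟩)))))
  rw [map_mul] at h
  exact h

lemma sum_εN : (∑ i : ZMod n, εN K n r i) = 1 := by
  have h := relN_zero (K := K) (n := n) (r := r) _
    (Or.inl (Or.inl (Or.inl (Or.inr rfl))))
  rw [map_sub, map_sum, map_one, sub_eq_zero] at h
  exact h

lemma εN_mul_αN_same (i : ZMod n) : εN K n r i * αN K n r i = αN K n r i := by
  have h := relN_zero (K := K) (n := n) (r := r) _
    (Or.inl (Or.inl (Or.inr ⟨i, rfl⟩)))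
  rw [map_sub, map_mul, sub_eq_zero] at h
  exact h

lemma αN_mul_εN_same (i : ZMod n) : αN K n r i * εN K n r (i + 1) = αN K n r i := by
  have h := relN_zero (K := K) (n := n) (r := r) _
    (Or.inl (Or.inr ⟨i, rfl⟩))
  rw [map_sub, map_mul, sub_eq_zero] at h
  exact h

lemma arrN_r_eq_zero (i : ZMod n) : arrN K n r i r = 0 := by
  have h := relN_zero (K := K) (n := n) (r := r) _ (Or.inr ⟨i, rfl⟩)
  rw [arrN, ← castListN]
  exact h

lemma εN_mul_αN {i j : ZMod n} (hij : j ≠ i) : εN K n r j * αN K n r i = 0 := by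
  rw [← εN_mul_αN_same i, ← mul_assoc, εN_mul_εN hij, zero_mul]

lemma αN_mul_εN {i j : ZMod n} (hij : j ≠ i + 1) : αN K n r i * εN K n r j = 0 := by
  rw [← αN_mul_εN_same i, mul_assoc, εN_mul_εN (Ne.symm hij), mul_zero]

lemma arrN_zero (i : ZMod n) : arrN K n r i 0 = 1 := by
  simp [arrN, List.range_zero]

lemma arrN_succ (i : ZMod n) (l : ℕ) :
    arrN K n r i (l + 1) = arrN K n r i l * αN K n r (i + (l : ZMod n)) := by
  simp only [arrN, List.range_succ, List.map_append, List.map_cons, List.map_nil,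
    List.prod_append, List.prod_cons, List.prod_nil, mul_one, map_mul, αN]

lemma arrN_one (i : ZMod n) : arrN K n r i 1 = αN K n r i := by
  rw [show (1:ℕ) = 0 + 1 from rfl, arrN_succ, arrN_zero, one_mul]
  norm_num

lemma arrN_mul (i : ZMod n) (l m : ℕ) :
    arrN K n r i l * arrN K n r (i + (l : ZMod n)) m = arrN K n r i (l + m) := by
  induction m with
  | zero => simp [arrN_zero]
  | succ m ih =>
    rw [arrN_succ, ← mul_assoc, ih, ← add_assoc, arrN_succ]
    push_cast
    ring_nf

lemma εN_mul_arrN (i : ZMod n) (l : ℕ) (hl : 1 ≤ l) :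
    εN K n r i * arrN K n r i l = arrN K n r i l := by
  induction l with
  | zero => omega
  | succ l ih =>
    rcases Nat.eq_zero_or_pos l with h | h
    · subst h; rw [arrN_one, εN_mul_αN_same]
    · rw [arrN_succ, ← mul_assoc, ih h]

lemma arrN_mul_εN_same (i : ZMod n) (l : ℕ) (hl : 1 ≤ l) :
    arrN K n r i l * εN K n r (i + (l : ZMod n)) = arrN K n r i l := by
  obtain ⟨l, rfl⟩ := Nat.exists_eq_succ_of_ne_zero (by omega : l ≠ 0)
  rw [arrN_succ]
  push_cast
  rw [mul_assoc]
  rw [show (i + ((l:ZMod n) + 1)) = (i + l) + 1 by ring]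
  rw [αN_mul_εN_same]

lemma arrN_mul_εN (i : ZMod n) (l : ℕ) (hl : 1 ≤ l) {j : ZMod n} (hj : j ≠ i + (l : ZMod n)) :
    arrN K n r i l * εN K n r j = 0 := by
  obtain ⟨l, rfl⟩ := Nat.exists_eq_succ_of_ne_zero (by omega : l ≠ 0)
  rw [arrN_succ, mul_assoc, αN_mul_εN, mul_zero]
  intro h
  apply hj
  rw [h]
  push_cast
  ring

lemma pN_zero_len (i : ZMod n) : pN K n r i 0 = εN K n r i := by
  rw [pN, arrN_zero, mul_one]

lemma pN_eq_arrN (i : ZMod n) (l : ℕ) (hl : 1 ≤ l) : pN K n r i l = arrN K n r i l := by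
  rw [pN, εN_mul_arrN _ _ hl]

lemma εN_mul_pN_same (i : ZMod n) (l : ℕ) : εN K n r i * pN K n r i l = pN K n r i l := by
  rw [pN, ← mul_assoc, εN_mul_self]

lemma εN_mul_pN {i j : ZMod n} (l : ℕ) (hij : j ≠ i) : εN K n r j * pN K n r i l = 0 := by
  rw [pN, ← mul_assoc, εN_mul_εN hij, zero_mul]

lemma pN_mul_εN_same (i : ZMod n) (l : ℕ) :
    pN K n r i l * εN K n r (i + (l : ZMod n)) = pN K n r i l := by
  rcases Nat.eq_zero_or_pos l with h | h
  · subst h; rw [pN_zero_len]; push_cast; rw [add_zero, εN_mul_self]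
  · rw [pN_eq_arrN _ _ h, arrN_mul_εN_same _ _ h]

lemma pN_mul_εN (i : ZMod n) (l : ℕ) {j : ZMod n} (hj : j ≠ i + (l : ZMod n)) :
    pN K n r i l * εN K n r j = 0 := by
  rcases Nat.eq_zero_or_pos l with h | h
  · subst h
    rw [pN_zero_len, εN_mul_εN]
    intro hh; apply hj; rw [hh]; push_cast; ring
  · rw [pN_eq_arrN _ _ h, arrN_mul_εN _ _ h hj]

lemma pN_mul_pN_same (i : ZMod n) (l m : ℕ) :
    pN K n r i l * pN K n r (i + (l : ZMod n)) m = pN K n r i (l + m) := by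
  nth_rewrite 2 [pN]
  rw [← mul_assoc, pN_mul_εN_same, pN, mul_assoc, arrN_mul, pN]

lemma pN_mul_pN {i j : ZMod n} (l m : ℕ) (hij : j ≠ i + (l : ZMod n)) :
    pN K n r i l * pN K n r j m = 0 := by
  nth_rewrite 2 [pN]
  rw [← mul_assoc, pN_mul_εN _ _ hij, zero_mul]

lemma arrN_eq_zero (i : ZMod n) {l : ℕ} (hl : r ≤ l) : arrN K n r i l = 0 := by
  have h := arrN_mul (K := K) (n := n) (r := r) i r (l - r)
  rw [arrN_r_eq_zero, zero_mul, Nat.add_sub_cancel' hl] at h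
  exact h.symm

lemma pN_eq_zero (i : ZMod n) {l : ℕ} (hl : r ≤ l) : pN K n r i l = 0 := by
  rw [pN, arrN_eq_zero _ hl, mul_zero]
/-- Index set for the spanning paths of `Nalg`. -/
def SN (K : Type) [Field K] (n r : ℕ) [NeZero n] : Submodule K (Nalg K n r) :=
  Submodule.span K (Set.range fun p : ZMod n × Fin r => pN K n r p.1 p.2.1)

lemma pN_mem_SN (hr : 0 < r) (i : ZMod n) (l : ℕ) : pN K n r i l ∈ SN K n r := by
  rcases lt_or_ge l r with h | h
  · exact Submodule.subset_span ⟨(i, ⟨l, h⟩), rfl⟩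
  · rw [pN_eq_zero _ h]; exact Submodule.zero_mem _

lemma SN_mul_mem (hr : 0 < r) {x y : Nalg K n r} (hx : x ∈ SN K n r) (hy : y ∈ SN K n r) :
    x * y ∈ SN K n r := by
  induction hx using Submodule.span_induction with
  | mem x hx =>
    obtain ⟨⟨i, l⟩, rfl⟩ := hx
    induction hy using Submodule.span_induction with
    | mem y hy =>
      obtain ⟨⟨j, m⟩, rfl⟩ := hy
      rcases eq_or_ne j (i + (l.1 : ZMod n)) with h | h
      · subst h; rw [pN_mul_pN_same]; exact pN_mem_SN hr _ _
      · rw [pN_mul_pN _ _ h]; exact Submodule.zero_mem _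
    | zero => rw [mul_zero]; exact Submodule.zero_mem _
    | add y z _ _ hy hz => rw [mul_add]; exact Submodule.add_mem _ hy hz
    | smul a y _ hy => rw [mul_smul_comm]; exact Submodule.smul_mem _ _ hy
  | zero => rw [zero_mul]; exact Submodule.zero_mem _
  | add x z _ _ hx1 hx2 => rw [add_mul]; exact Submodule.add_mem _ hx1 hx2
  | smul a x _ hx1 => rw [smul_mul_assoc]; exact Submodule.smul_mem _ _ hx1

lemma one_mem_SN (hr : 0 < r) : (1 : Nalg K n r) ∈ SN K n r := by
  rw [← sum_εN (K := K) (n := n) (r := r)]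
  refine Submodule.sum_mem _ fun i _ => ?_
  rw [← pN_zero_len]
  exact pN_mem_SN hr i 0

lemma mem_SN (hr : 1 < r) (x : Nalg K n r) : x ∈ SN K n r := by
  obtain ⟨w, rfl⟩ := RingQuot.mkAlgHom_surjective K _ x
  show NalgMk K n r w ∈ SN K n r
  induction w using FreeAlgebra.induction with
  | grade0 c =>
    rw [AlgHom.commutes]
    rw [Algebra.algebraMap_eq_smul_one]
    exact Submodule.smul_mem _ _ (one_mem_SN (by omega))
  | grade1 g =>
    rcases g with i | i
    · show εN K n r i ∈ SN K n r
      rw [← pN_zero_len]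
      exact pN_mem_SN (by omega) i 0
    · have : NalgMk K n r (FreeAlgebra.ι K (Sum.inr i)) = pN K n r i 1 := by
        rw [pN_eq_arrN _ _ le_rfl, arrN_one]; rfl
      rw [this]
      exact pN_mem_SN (by omega) i 1
  | mul a b ha hb => rw [map_mul]; exact SN_mul_mem (by omega) ha hb
  | add a b ha hb => rw [map_add]; exact Submodule.add_mem _ ha hb
variable {s : ℕ} [NeZero s]

def AalgMk (K : Type) [Field K] (s r : ℕ) [NeZero s] :
    FreeAlgebra K (Fin s ⊕ Fin s) →ₐ[K] Aalg K s r :=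
  RingQuot.mkAlgHom K _

def εA (K : Type) [Field K] (s r : ℕ) [NeZero s] (i : Fin s) : Aalg K s r :=
  AalgMk K s r (lE K s i)

def αA (K : Type) [Field K] (s r : ℕ) [NeZero s] (i : Fin s) : Aalg K s r :=
  AalgMk K s r (lA K s i)

lemma castListA (i : Fin s) (l : ℕ) :
    (List.map (fun k => lA K s (i + k)) (do let a ← List.range l; pure ((a : Fin s)))) =
      (List.range l).map (fun k : ℕ => lA K s (i + (k : Fin s))) := by
  induction l with
  | zero => rfl
  | succ l ih => rw [List.range_succ]; simp_all

def arrA (K : Type) [Field K] (s r : ℕ) [NeZero s] (i : Fin s) (l : ℕ) : Aalg K s r :=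
  AalgMk K s r (((List.range l).map (fun k : ℕ => lA K s (i + (k : Fin s)))).prod)

def pA (K : Type) [Field K] (s r : ℕ) [NeZero s] (i : Fin s) (l : ℕ) : Aalg K s r :=
  εA K s r i * arrA K s r i l

lemma relA_zero (x : FreeAlgebra K (Fin s ⊕ Fin s)) (hx : x ∈ linRels K s r) :
    AalgMk K s r x = 0 := by
  have h := RingQuot.mkAlgHom_rel K
    (s := fun a b : FreeAlgebra K (Fin s ⊕ Fin s) => a ∈ linRels K s r ∧ b = 0)
    (x := x) (y := 0) ⟨hx, rfl⟩
  rw [map_zero] at h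
  exact h

lemma εA_mul_self (i : Fin s) : εA K s r i * εA K s r i = εA K s r i := by
  have h := relA_zero (K := K) (s := s) (r := r) _
    (Or.inl (Or.inl (Or.inl (Or.inl (Or.inl (Or.inl ⟨i, rfl⟩))))))
  rw [map_sub, map_mul, sub_eq_zero] at h
  exact h

lemma εA_mul_εA {i j : Fin s} (hij : i ≠ j) : εA K s r i * εA K s r j = 0 := by
  have h := relA_zero (K := K) (s := s) (r := r) _
    (Or.inl (Or.inl (Or.inl (Or.inl (Or.inl (Or.inr ⟨i, j, hij, rfl⟩))))))
  rw [map_mul] at h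
  exact h

lemma sum_εA : (∑ i : Fin s, εA K s r i) = 1 := by
  have h := relA_zero (K := K) (s := s) (r := r) _
    (Or.inl (Or.inl (Or.inl (Or.inl (Or.inr rfl)))))
  rw [map_sub, map_sum, map_one, sub_eq_zero] at h
  exact h

lemma αA_last {i : Fin s} (hi : (i : ℕ) + 1 = s) : αA K s r i = 0 := by
  have h := relA_zero (K := K) (s := s) (r := r) _
    (Or.inl (Or.inl (Or.inl (Or.inr ⟨i, hi, rfl⟩))))
  exact h

lemma εA_mul_αA_same (i : Fin s) : εA K s r i * αA K s r i = αA K s r i := by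
  have h := relA_zero (K := K) (s := s) (r := r) _
    (Or.inl (Or.inl (Or.inr ⟨i, rfl⟩)))
  rw [map_sub, map_mul, sub_eq_zero] at h
  exact h

lemma αA_mul_εA_same (i : Fin s) : αA K s r i * εA K s r (i + 1) = αA K s r i := by
  have h := relA_zero (K := K) (s := s) (r := r) _
    (Or.inl (Or.inr ⟨i, rfl⟩))
  rw [map_sub, map_mul, sub_eq_zero] at h
  exact h

lemma arrA_r_eq_zero (i : Fin s) : arrA K s r i r = 0 := by
  have h := relA_zero (K := K) (s := s) (r := r) _ (Or.inr ⟨i, rfl⟩)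
  rw [arrA, ← castListA]
  exact h

lemma εA_mul_αA {i j : Fin s} (hij : j ≠ i) : εA K s r j * αA K s r i = 0 := by
  rw [← εA_mul_αA_same i, ← mul_assoc, εA_mul_εA hij, zero_mul]

lemma αA_mul_εA {i j : Fin s} (hij : j ≠ i + 1) : αA K s r i * εA K s r j = 0 := by
  rw [← αA_mul_εA_same i, mul_assoc, εA_mul_εA (Ne.symm hij), mul_zero]

lemma arrA_zero (i : Fin s) : arrA K s r i 0 = 1 := by
  simp [arrA, List.range_zero]

lemma arrA_succ (i : Fin s) (l : ℕ) :
    arrA K s r i (l + 1) = arrA K s r i l * αA K s r (i + (l : Fin s)) := by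
  simp only [arrA, List.range_succ, List.map_append, List.map_cons, List.map_nil,
    List.prod_append, List.prod_cons, List.prod_nil, mul_one, map_mul, αA]

lemma arrA_one (i : Fin s) : arrA K s r i 1 = αA K s r i := by
  rw [show (1:ℕ) = 0 + 1 from rfl, arrA_succ, arrA_zero, one_mul]
  norm_num

lemma arrA_mul (i : Fin s) (l m : ℕ) :
    arrA K s r i l * arrA K s r (i + (l : Fin s)) m = arrA K s r i (l + m) := by
  induction m with
  | zero => simp [arrA_zero]
  | succ m ih =>
    rw [arrA_succ, ← mul_assoc, ih, ← add_assoc, arrA_succ]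
    push_cast
    ring_nf

lemma εA_mul_arrA (i : Fin s) (l : ℕ) (hl : 1 ≤ l) :
    εA K s r i * arrA K s r i l = arrA K s r i l := by
  induction l with
  | zero => omega
  | succ l ih =>
    rcases Nat.eq_zero_or_pos l with h | h
    · subst h; rw [arrA_one, εA_mul_αA_same]
    · rw [arrA_succ, ← mul_assoc, ih h]

lemma arrA_mul_εA_same (i : Fin s) (l : ℕ) (hl : 1 ≤ l) :
    arrA K s r i l * εA K s r (i + (l : Fin s)) = arrA K s r i l := by
  obtain ⟨l, rfl⟩ := Nat.exists_eq_succ_of_ne_zero (by omega : l ≠ 0)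
  rw [arrA_succ]
  push_cast
  rw [mul_assoc]
  rw [show (i + ((l:Fin s) + 1)) = (i + l) + 1 by ring]
  rw [αA_mul_εA_same]

lemma arrA_mul_εA (i : Fin s) (l : ℕ) (hl : 1 ≤ l) {j : Fin s} (hj : j ≠ i + (l : Fin s)) :
    arrA K s r i l * εA K s r j = 0 := by
  obtain ⟨l, rfl⟩ := Nat.exists_eq_succ_of_ne_zero (by omega : l ≠ 0)
  rw [arrA_succ, mul_assoc, αA_mul_εA, mul_zero]
  intro h
  apply hj
  rw [h]
  push_cast
  ring

lemma pA_zero_len (i : Fin s) : pA K s r i 0 = εA K s r i := by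
  rw [pA, arrA_zero, mul_one]

lemma pA_eq_arrA (i : Fin s) (l : ℕ) (hl : 1 ≤ l) : pA K s r i l = arrA K s r i l := by
  rw [pA, εA_mul_arrA _ _ hl]

lemma pA_mul_εA_same (i : Fin s) (l : ℕ) :
    pA K s r i l * εA K s r (i + (l : Fin s)) = pA K s r i l := by
  rcases Nat.eq_zero_or_pos l with h | h
  · subst h; rw [pA_zero_len]; push_cast; rw [add_zero, εA_mul_self]
  · rw [pA_eq_arrA _ _ h, arrA_mul_εA_same _ _ h]

lemma pA_mul_εA (i : Fin s) (l : ℕ) {j : Fin s} (hj : j ≠ i + (l : Fin s)) :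
    pA K s r i l * εA K s r j = 0 := by
  rcases Nat.eq_zero_or_pos l with h | h
  · subst h
    rw [pA_zero_len, εA_mul_εA]
    intro hh; apply hj; rw [hh]; push_cast; ring
  · rw [pA_eq_arrA _ _ h, arrA_mul_εA _ _ h hj]

lemma pA_mul_pA_same (i : Fin s) (l m : ℕ) :
    pA K s r i l * pA K s r (i + (l : Fin s)) m = pA K s r i (l + m) := by
  nth_rewrite 2 [pA]
  rw [← mul_assoc, pA_mul_εA_same, pA, mul_assoc, arrA_mul, pA]

lemma pA_mul_pA {i j : Fin s} (l m : ℕ) (hij : j ≠ i + (l : Fin s)) :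
    pA K s r i l * pA K s r j m = 0 := by
  nth_rewrite 2 [pA]
  rw [← mul_assoc, pA_mul_εA _ _ hij, zero_mul]

lemma arrA_eq_zero (i : Fin s) {l : ℕ} (hl : r ≤ l) : arrA K s r i l = 0 := by
  have h := arrA_mul (K := K) (s := s) (r := r) i r (l - r)
  rw [arrA_r_eq_zero, zero_mul, Nat.add_sub_cancel' hl] at h
  exact h.symm

lemma pA_eq_zero (i : Fin s) {l : ℕ} (hl : r ≤ l) : pA K s r i l = 0 := by
  rw [pA, arrA_eq_zero _ hl, mul_zero]

lemma fin_add_val (i : Fin s) (k : ℕ) (h : i.1 + k < s) : (i + (k : Fin s)).1 = i.1 + k := by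
  rw [Fin.add_def]
  show (i.1 + ((k : Fin s)).1) % s = _
  have hk : ((k : Fin s)).1 = k := by
    simp [Fin.val_natCast, Nat.mod_eq_of_lt (by omega : k < s)]
  rw [hk, Nat.mod_eq_of_lt h]

lemma arrA_invalid (i : Fin s) {l : ℕ} (hl : s ≤ i.1 + l) : arrA K s r i l = 0 := by
  set k := s - 1 - i.1 with hk
  have hks : i.1 + k = s - 1 := by have := i.2; omega
  have hkl : k + 1 ≤ l := by have := i.2; omega
  have h1 : arrA K s r i (k + 1) = 0 := by
    rw [arrA_succ, αA_last, mul_zero]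
    rw [fin_add_val i k (by have := i.2; omega)]
    have := i.2; omega
  have h2 := arrA_mul (K := K) (s := s) (r := r) i (k + 1) (l - (k + 1))
  rw [h1, zero_mul, Nat.add_sub_cancel' hkl] at h2
  exact h2.symm

lemma pA_invalid (i : Fin s) {l : ℕ} (hl : s ≤ i.1 + l) : pA K s r i l = 0 := by
  rw [pA, arrA_invalid _ hl, mul_zero]

def SA (K : Type) [Field K] (s r : ℕ) [NeZero s] : Submodule K (Aalg K s r) :=
  Submodule.span K (Set.range fun p : Fin s × Fin r => pA K s r p.1 p.2.1)

lemma pA_mem_SA (hr : 0 < r) (i : Fin s) (l : ℕ) : pA K s r i l ∈ SA K s r := by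
  rcases lt_or_ge l r with h | h
  · exact Submodule.subset_span ⟨(i, ⟨l, h⟩), rfl⟩
  · rw [pA_eq_zero _ h]; exact Submodule.zero_mem _

lemma SA_mul_mem (hr : 0 < r) {x y : Aalg K s r} (hx : x ∈ SA K s r) (hy : y ∈ SA K s r) :
    x * y ∈ SA K s r := by
  induction hx using Submodule.span_induction with
  | mem x hx =>
    obtain ⟨⟨i, l⟩, rfl⟩ := hx
    induction hy using Submodule.span_induction with
    | mem y hy =>
      obtain ⟨⟨j, m⟩, rfl⟩ := hy
      rcases eq_or_ne j (i + (l.1 : Fin s)) with h | h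
      · subst h; rw [pA_mul_pA_same]; exact pA_mem_SA hr _ _
      · rw [pA_mul_pA _ _ h]; exact Submodule.zero_mem _
    | zero => rw [mul_zero]; exact Submodule.zero_mem _
    | add y z _ _ hy hz => rw [mul_add]; exact Submodule.add_mem _ hy hz
    | smul a y _ hy => rw [mul_smul_comm]; exact Submodule.smul_mem _ _ hy
  | zero => rw [zero_mul]; exact Submodule.zero_mem _
  | add x z _ _ hx1 hx2 => rw [add_mul]; exact Submodule.add_mem _ hx1 hx2
  | smul a x _ hx1 => rw [smul_mul_assoc]; exact Submodule.smul_mem _ _ hx1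

lemma one_mem_SA (hr : 0 < r) : (1 : Aalg K s r) ∈ SA K s r := by
  rw [← sum_εA (K := K) (s := s) (r := r)]
  refine Submodule.sum_mem _ fun i _ => ?_
  rw [← pA_zero_len]
  exact pA_mem_SA hr i 0

lemma mem_SA (hr : 1 < r) (x : Aalg K s r) : x ∈ SA K s r := by
  obtain ⟨w, rfl⟩ := RingQuot.mkAlgHom_surjective K _ x
  show AalgMk K s r w ∈ SA K s r
  induction w using FreeAlgebra.induction with
  | grade0 c =>
    rw [AlgHom.commutes, Algebra.algebraMap_eq_smul_one]
    exact Submodule.smul_mem _ _ (one_mem_SA (by omega))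
  | grade1 g =>
    rcases g with i | i
    · show εA K s r i ∈ SA K s r
      rw [← pA_zero_len]
      exact pA_mem_SA (by omega) i 0
    · show αA K s r i ∈ SA K s r
      rw [← arrA_one, ← pA_eq_arrA _ _ le_rfl]
      exact pA_mem_SA (by omega) i 1
  | mul a b ha hb => rw [map_mul]; exact SA_mul_mem (by omega) ha hb
  | add a b ha hb => rw [map_add]; exact Submodule.add_mem _ ha hb
section CornerRing
variable {R : Type} [Ring R]

/-- The corner subspace `eRe` determined by an idempotent `e`. -/
structure CornerT (e : R) where
  val : R
  prop : e * val * e = val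

variable {e : R} [he : Fact (e * e = e)]

namespace CornerT

lemma ext' {x y : CornerT e} (h : x.val = y.val) : x = y := by
  cases x; cases y; simpa using h

lemma e_mul_val (x : CornerT e) : e * x.val = x.val := by
  conv_lhs => rw [← x.prop]
  rw [← mul_assoc, ← mul_assoc, he.out]
  rw [x.prop]

lemma val_mul_e (x : CornerT e) : x.val * e = x.val := by
  conv_lhs => rw [← x.prop]
  rw [mul_assoc, he.out]
  rw [x.prop]

instance : Ring (CornerT e) where
  add x y := ⟨x.val + y.val, by rw [mul_add, add_mul, x.prop, y.prop]⟩
  zero := ⟨0, by rw [mul_zero, zero_mul]⟩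
  neg x := ⟨-x.val, by rw [mul_neg, neg_mul, x.prop]⟩
  mul x y := ⟨x.val * y.val, by rw [← mul_assoc e, e_mul_val, mul_assoc, val_mul_e]⟩
  one := ⟨e, by rw [he.out, he.out]⟩
  nsmul m x := ⟨m • x.val, by rw [mul_smul_comm, smul_mul_assoc, x.prop]⟩
  nsmul_zero x := ext' (zero_nsmul _)
  nsmul_succ m x := ext' (succ_nsmul _ _)
  zsmul z x := ⟨z • x.val, by rw [mul_smul_comm, smul_mul_assoc, x.prop]⟩
  zsmul_zero' x := ext' (zero_zsmul _)
  zsmul_succ' m x := ext' <| by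
    show ((m : ℕ) + 1 : ℤ) • x.val = (m : ℤ) • x.val + x.val
    rw [add_zsmul, one_zsmul]
  zsmul_neg' m x := ext' <| by
    show (Int.negSucc m) • x.val = -(((m : ℕ).succ : ℤ) • x.val)
    rw [negSucc_zsmul]
    norm_cast
  add_assoc a b c := ext' (add_assoc _ _ _)
  zero_add a := ext' (zero_add _)
  add_zero a := ext' (add_zero _)
  add_comm a b := ext' (add_comm _ _)
  neg_add_cancel a := ext' (neg_add_cancel _)
  mul_assoc a b c := ext' (mul_assoc _ _ _)
  one_mul a := ext' (e_mul_val a)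
  mul_one a := ext' (val_mul_e a)
  left_distrib a b c := ext' (left_distrib _ _ _)
  right_distrib a b c := ext' (right_distrib _ _ _)
  zero_mul a := ext' (zero_mul _)
  mul_zero a := ext' (mul_zero _)

@[simp] lemma val_mul (x y : CornerT e) : (x * y).val = x.val * y.val := rfl
@[simp] lemma val_add (x y : CornerT e) : (x + y).val = x.val + y.val := rfl
@[simp] lemma val_one : (1 : CornerT e).val = e := rfl
@[simp] lemma val_zero : (0 : CornerT e).val = 0 := rfl

lemma val_injective : Function.Injective (CornerT.val : CornerT e → R) :=
  fun _ _ h => ext' h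

variable (K : Type) [Field K] [Algebra K R]

instance : Algebra K (CornerT e) where
  smul c x := ⟨c • x.val, by rw [mul_smul_comm, smul_mul_assoc, x.prop]⟩
  algebraMap :=
  { toFun := fun c => ⟨c • e, by rw [mul_smul_comm, smul_mul_assoc, he.out, he.out]⟩
    map_one' := ext' (by show (1:K) • e = e; exact one_smul K e)
    map_mul' := fun c d => ext' <| by
      show (c * d) • e = (c • e) * (d • e)
      rw [smul_mul_assoc, mul_smul_comm, he.out, mul_smul]
    map_zero' := ext' (by show (0:K) • e = 0; exact zero_smul K e)
    map_add' := fun c d => ext' (by show (c + d) • e = c • e + d • e; exact add_smul c d e) }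
  commutes' c x := ext' <| by
    show (c • e) * x.val = x.val * (c • e)
    rw [smul_mul_assoc, mul_smul_comm, e_mul_val, val_mul_e]
  smul_def' c x := ext' <| by
    show c • x.val = (c • e) * x.val
    rw [smul_mul_assoc, e_mul_val]

@[simp] lemma val_smul (c : K) (x : CornerT e) : (c • x).val = c • x.val := rfl

lemma val_list_prod (l : List (CornerT e)) : (l.prod).val = (l.map CornerT.val).prod * e := by
  induction l with
  | nil => simp
  | cons a t ih =>
    rw [List.prod_cons, val_mul, ih, List.map_cons, List.prod_cons, mul_assoc]

/-- The inclusion of the corner into `R`, as a linear map. -/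
def ι : CornerT e →ₗ[K] R where
  toFun := CornerT.val
  map_add' _ _ := rfl
  map_smul' _ _ := rfl

@[simp] lemma ι_apply (x : CornerT e) : ι K x = x.val := rfl

end CornerT
end CornerRing
lemma zmodCast_inj (hsn : s ≤ n) {i j : ℕ} (hi : i < s) (hj : j < s)
    (h : (i : ZMod n) = (j : ZMod n)) : i = j := by
  have h1 := ZMod.val_cast_of_lt (show i < n by omega)
  have h2 := ZMod.val_cast_of_lt (show j < n by omega)
  rw [h, h2] at h1
  omega

lemma cornerIdem_eq :
    cornerIdem K n r s = ∑ i ∈ Finset.range s, εN K n r (i : ZMod n) := rfl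

lemma e_mul_εN (hsn : s ≤ n) {i : ℕ} (hi : i < s) :
    cornerIdem K n r s * εN K n r (i : ZMod n) = εN K n r (i : ZMod n) := by
  calc cornerIdem K n r s * εN K n r (i : ZMod n)
      = ∑ j ∈ Finset.range s, εN K n r (j : ZMod n) * εN K n r (i : ZMod n) := by
        rw [cornerIdem_eq]; erw [Finset.sum_mul]; rfl
    _ = εN K n r (i : ZMod n) * εN K n r (i : ZMod n) :=
        Finset.sum_eq_single_of_mem _ (Finset.mem_range.2 hi) (fun b hb hbne =>
          εN_mul_εN (fun hc => hbne (zmodCast_inj hsn (Finset.mem_range.1 hb) hi hc)))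
    _ = εN K n r (i : ZMod n) := εN_mul_self _

lemma εN_mul_e (hsn : s ≤ n) {i : ℕ} (hi : i < s) :
    εN K n r (i : ZMod n) * cornerIdem K n r s = εN K n r (i : ZMod n) := by
  calc εN K n r (i : ZMod n) * cornerIdem K n r s
      = ∑ j ∈ Finset.range s, εN K n r (i : ZMod n) * εN K n r (j : ZMod n) := by
        rw [cornerIdem_eq]; erw [Finset.mul_sum]; rfl
    _ = εN K n r (i : ZMod n) * εN K n r (i : ZMod n) :=
        Finset.sum_eq_single_of_mem _ (Finset.mem_range.2 hi) (fun b hb hbne =>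
          εN_mul_εN (fun hc => hbne (zmodCast_inj hsn hi (Finset.mem_range.1 hb) hc).symm))
    _ = εN K n r (i : ZMod n) := εN_mul_self _

lemma e_idem (hsn : s ≤ n) :
    cornerIdem K n r s * cornerIdem K n r s = cornerIdem K n r s := by
  nth_rewrite 2 [cornerIdem_eq]
  erw [Finset.mul_sum]
  erw [Finset.sum_congr rfl (fun j hj => e_mul_εN hsn (Finset.mem_range.1 hj))]
  rw [← cornerIdem_eq]

lemma e_mul_αN (hsn : s ≤ n) {i : ℕ} (hi : i < s) :
    cornerIdem K n r s * αN K n r (i : ZMod n) = αN K n r (i : ZMod n) := by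
  rw [← εN_mul_αN_same ((i : ZMod n)), ← mul_assoc, e_mul_εN hsn hi]

lemma αN_mul_e (hsn : s ≤ n) {i : ℕ} (hi : i + 1 < s) :
    αN K n r (i : ZMod n) * cornerIdem K n r s = αN K n r (i : ZMod n) := by
  have hc : (i : ZMod n) + 1 = ((i + 1 : ℕ) : ZMod n) := by push_cast; ring
  rw [← αN_mul_εN_same, mul_assoc, hc, εN_mul_e hsn hi]

lemma e_mul_pN (hsn : s ≤ n) {i : ℕ} (hi : i < s) (l : ℕ) :
    cornerIdem K n r s * pN K n r (i : ZMod n) l = pN K n r (i : ZMod n) l := by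
  rw [pN, ← mul_assoc, e_mul_εN hsn hi]

lemma e_mul_pN_zero (hsn : s ≤ n) {i : ZMod n} (hi : ∀ j : ℕ, j < s → (j : ZMod n) ≠ i)
    (l : ℕ) : cornerIdem K n r s * pN K n r i l = 0 := by
  rw [pN, ← mul_assoc, cornerIdem_eq]; erw [Finset.sum_mul]
  erw [Finset.sum_congr rfl
    (fun j hj => εN_mul_εN (hi j (Finset.mem_range.1 hj)) : ∀ j ∈ Finset.range s, _)]
  simp

lemma pN_mul_e (hsn : s ≤ n) (i : ZMod n) (l : ℕ) {j : ℕ} (hj : j < s)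
    (hij : (j : ZMod n) = i + (l : ZMod n)) :
    pN K n r i l * cornerIdem K n r s = pN K n r i l := by
  calc pN K n r i l * cornerIdem K n r s
      = ∑ j' ∈ Finset.range s, pN K n r i l * εN K n r (j' : ZMod n) := by
        rw [cornerIdem_eq]; erw [Finset.mul_sum]; rfl
    _ = pN K n r i l * εN K n r (j : ZMod n) :=
        Finset.sum_eq_single_of_mem _ (Finset.mem_range.2 hj) (fun b hb hbne =>
          pN_mul_εN _ _ (fun hc => hbne
            (zmodCast_inj hsn (Finset.mem_range.1 hb) hj (hc.trans hij.symm))))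
    _ = pN K n r i l := by rw [hij, pN_mul_εN_same]

lemma pN_mul_e_zero (hsn : s ≤ n) (i : ZMod n) (l : ℕ)
    (hij : ∀ j : ℕ, j < s → (j : ZMod n) ≠ i + (l : ZMod n)) :
    pN K n r i l * cornerIdem K n r s = 0 := by
  rw [cornerIdem_eq]; erw [Finset.mul_sum]
  erw [Finset.sum_congr rfl
    (fun j hj => pN_mul_εN _ _ (hij j (Finset.mem_range.1 hj)) : ∀ j ∈ Finset.range s, _)]
  simp
lemma fin_val_add_one {i : Fin s} (h : i.1 + 1 < s) : (i + 1).1 = i.1 + 1 := by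
  rw [Fin.add_def]
  show (i.1 + ((1 : Fin s)).1) % s = _
  have h1 : ((1 : Fin s)).1 = 1 % s := rfl
  have h2 : 1 % s = 1 := Nat.mod_eq_of_lt (by omega)
  rw [h1, h2, Nat.mod_eq_of_lt h]

lemma arrN_eq_prod (i : ZMod n) (l : ℕ) :
    arrN K n r i l = ((List.range l).map (fun k : ℕ => αN K n r (i + (k : ZMod n)))).prod := by
  rw [arrN, map_list_prod, List.map_map]
  rfl

section Fmap

variable [Fact (cornerIdem K n r s * cornerIdem K n r s = cornerIdem K n r s)]

def genC (hsn : s ≤ n) : Fin s ⊕ Fin s → CornerT (cornerIdem K n r s)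
  | Sum.inl i => ⟨εN K n r (i.1 : ZMod n), by rw [e_mul_εN hsn i.2, εN_mul_e hsn i.2]⟩
  | Sum.inr i =>
    if h : i.1 + 1 < s then
      ⟨αN K n r (i.1 : ZMod n), by rw [e_mul_αN hsn (by omega), αN_mul_e hsn h]⟩
    else 0

def Fhom (hsn : s ≤ n) :
    FreeAlgebra K (Fin s ⊕ Fin s) →ₐ[K] CornerT (cornerIdem K n r s) :=
  FreeAlgebra.lift K (genC hsn)

lemma Fhom_lE (hsn : s ≤ n) (i : Fin s) :
    Fhom (K := K) (r := r) hsn (lE K s i) = genC hsn (Sum.inl i) :=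
  FreeAlgebra.lift_ι_apply _ _

lemma Fhom_lA (hsn : s ≤ n) (i : Fin s) :
    Fhom (K := K) (r := r) hsn (lA K s i) = genC hsn (Sum.inr i) :=
  FreeAlgebra.lift_ι_apply _ _

lemma val_sum {T : Type} (t : Finset T) (g : T → CornerT (cornerIdem K n r s)) :
    (∑ i ∈ t, g i).val = ∑ i ∈ t, (g i).val :=
  map_sum (CornerT.ι K (e := cornerIdem K n r s)) g t

lemma genC_val_inl (hsn : s ≤ n) (i : Fin s) :
    (genC (K := K) (n := n) (r := r) hsn (Sum.inl i)).val = εN K n r (i.1 : ZMod n) := rfl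

lemma genC_val_inr (hsn : s ≤ n) {i : Fin s} (h : i.1 + 1 < s) :
    (genC (K := K) (n := n) (r := r) hsn (Sum.inr i)).val = αN K n r (i.1 : ZMod n) := by
  rw [genC, dif_pos h]

lemma genC_inr_last (hsn : s ≤ n) {i : Fin s} (h : ¬ i.1 + 1 < s) :
    genC (K := K) (n := n) (r := r) hsn (Sum.inr i) = 0 := by
  rw [genC, dif_neg h]

lemma Fhom_rel (hr : 1 < r) (hsn : s ≤ n) :
    ∀ x ∈ linRels K s r, Fhom (K := K) (r := r) hsn x = 0 := by
  intro x hx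
  rcases hx with ((((((⟨i, rfl⟩ | ⟨i, j, hij, rfl⟩) | hx) | ⟨i, hi, rfl⟩) | ⟨i, rfl⟩) |
    ⟨i, rfl⟩) | ⟨i, rfl⟩)
  · rw [map_sub, map_mul, sub_eq_zero, Fhom_lE]
    exact CornerT.ext' (by rw [CornerT.val_mul, genC_val_inl, εN_mul_self])
  · rw [map_mul, Fhom_lE, Fhom_lE]
    refine CornerT.ext' ?_
    rw [CornerT.val_mul, genC_val_inl, genC_val_inl, CornerT.val_zero]
    refine εN_mul_εN (fun hc => hij ?_)
    exact Fin.ext (zmodCast_inj hsn i.2 j.2 hc)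
  · rw [Set.mem_singleton_iff] at hx
    subst hx
    rw [map_sub, map_sum, map_one, sub_eq_zero]
    refine CornerT.ext' ?_
    rw [val_sum, CornerT.val_one]
    calc ∑ i : Fin s, (Fhom (K := K) (r := r) hsn (lE K s i)).val
        = ∑ i : Fin s, εN K n r (i.1 : ZMod n) := by
          refine Finset.sum_congr rfl fun i _ => ?_
          rw [Fhom_lE, genC_val_inl]
      _ = ∑ i ∈ Finset.range s, εN K n r (i : ZMod n) :=
          Fin.sum_univ_eq_sum_range (fun j => εN K n r (j : ZMod n)) s
      _ = cornerIdem K n r s := (cornerIdem_eq).symm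
  · rw [Fhom_lA, genC_inr_last hsn (by omega)]
  · rw [map_sub, map_mul, sub_eq_zero, Fhom_lE, Fhom_lA]
    by_cases h : i.1 + 1 < s
    · refine CornerT.ext' ?_
      rw [CornerT.val_mul, genC_val_inl, genC_val_inr hsn h, εN_mul_αN_same]
    · rw [genC_inr_last hsn h, mul_zero]
  · rw [map_sub, map_mul, sub_eq_zero, Fhom_lE, Fhom_lA]
    by_cases h : i.1 + 1 < s
    · refine CornerT.ext' ?_
      rw [CornerT.val_mul, genC_val_inl, genC_val_inr hsn h]
      have hv : ((i + 1 : Fin s).1 : ZMod n) = (i.1 : ZMod n) + 1 := by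
        rw [fin_val_add_one h]; push_cast; ring
      rw [hv, αN_mul_εN_same]
    · rw [genC_inr_last hsn h, zero_mul]
  · rw [show (List.map (fun k => lA K s (i + k)) (do
        let a ← List.range r
        pure ((a : Fin s)))) = (List.range r).map (fun k : ℕ => lA K s (i + (k : Fin s)))
      from castListA i r]
    rw [map_list_prod, List.map_map]
    have hfact : ∀ k : ℕ, (Fhom (K := K) (r := r) hsn ∘ fun k : ℕ => lA K s (i + (k : Fin s))) k
        = genC hsn (Sum.inr (i + (k : Fin s))) := fun k => Fhom_lA hsn _
    by_cases hA : ∃ k, k < r ∧ (i + (k : Fin s)).1 + 1 = s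
    · obtain ⟨k, hk, hks⟩ := hA
      refine List.prod_eq_zero ?_
      rw [List.mem_map]
      exact ⟨k, List.mem_range.2 hk, by rw [hfact, genC_inr_last hsn (by omega)]⟩
    · push_neg at hA
      have key : ∀ k, k < r → (i + (k : Fin s)).1 = i.1 + k ∧ i.1 + k + 1 < s := by
        intro k
        induction k with
        | zero =>
          intro hk
          have h0 : i + ((0 : ℕ) : Fin s) = i := by push_cast; ring
          have h1 := hA 0 hk
          rw [h0] at h1 ⊢
          exact ⟨rfl, by have := i.2; omega⟩
        | succ k ih =>
          intro hk
          obtain ⟨h1, h2⟩ := ih (by omega)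
          have hv : i + ((k + 1 : ℕ) : Fin s) = (i + (k : Fin s)) + 1 := by push_cast; ring
          have hval : ((i + (k : Fin s)) + 1).1 = i.1 + k + 1 := by
            rw [fin_val_add_one (by omega : (i + (k : Fin s)).1 + 1 < s), h1]
          have h3 := hA (k + 1) hk
          rw [hv] at h3 ⊢
          rw [hval] at h3 ⊢
          have h4 : (i + (k : Fin s) + 1).1 < s := ((i + (k : Fin s)) + 1).2
          rw [hval] at h4
          exact ⟨rfl, by omega⟩
      refine CornerT.ext' ?_
      rw [CornerT.val_list_prod, CornerT.val_zero, List.map_map]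
      have hlist : (List.range r).map
          (CornerT.val ∘ (Fhom (K := K) (r := r) hsn ∘ fun k : ℕ => lA K s (i + (k : Fin s))))
          = (List.range r).map (fun k : ℕ => αN K n r ((i.1 : ZMod n) + (k : ZMod n))) := by
        refine List.map_congr_left fun k hk => ?_
        rw [List.mem_range] at hk
        obtain ⟨h1, h2⟩ := key k hk
        show ((Fhom (K := K) (r := r) hsn) (lA K s (i + (k : Fin s)))).val = _
        rw [Fhom_lA, genC_val_inr hsn (by omega), h1]
        push_cast
        ring_nf
      rw [hlist, ← arrN_eq_prod, arrN_r_eq_zero, zero_mul]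

def fC (hr : 1 < r) (hsn : s ≤ n) : Aalg K s r →ₐ[K] CornerT (cornerIdem K n r s) :=
  RingQuot.liftAlgHom K ⟨Fhom (r := r) hsn, fun x y hxy => by
    rw [Fhom_rel hr hsn x hxy.1, hxy.2, map_zero]⟩

lemma fC_mk (hr : 1 < r) (hsn : s ≤ n) (w : FreeAlgebra K (Fin s ⊕ Fin s)) :
    fC hr hsn (AalgMk K s r w) = Fhom (K := K) (r := r) hsn w :=
  RingQuot.liftAlgHom_mkAlgHom_apply K _ _ w

end Fmap
lemma fC_pA [Fact (cornerIdem K n r s * cornerIdem K n r s = cornerIdem K n r s)]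
    (hr : 1 < r) (hsn : s ≤ n) (i : Fin s) (l : ℕ) (hv : i.1 + l < s) :
    (fC (K := K) (n := n) hr hsn (pA K s r i l)).val = pN K n r (i.1 : ZMod n) l := by
  rw [pA, map_mul, CornerT.val_mul]
  have h1 : (fC (K := K) (n := n) hr hsn (εA K s r i)).val = εN K n r (i.1 : ZMod n) := by
    rw [εA, fC_mk, Fhom_lE, genC_val_inl]
  have h2 : (fC (K := K) (n := n) hr hsn (arrA K s r i l)).val
      = arrN K n r (i.1 : ZMod n) l * cornerIdem K n r s := by
    rw [arrA, fC_mk, map_list_prod, List.map_map, CornerT.val_list_prod, List.map_map]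
    congr 1
    rw [arrN_eq_prod]
    congr 1
    refine List.map_congr_left fun k hk => ?_
    rw [List.mem_range] at hk
    have hik : (i + (k : Fin s)).1 = i.1 + k := fin_add_val i k (by omega)
    show ((Fhom (K := K) (r := r) hsn) (lA K s (i + (k : Fin s)))).val = _
    rw [Fhom_lA, genC_val_inr hsn (by omega), hik]
    push_cast
    ring_nf
  rw [h1, h2, ← mul_assoc, ← pN]
  exact pN_mul_e hsn _ l (show i.1 + l < s from hv)
    (by push_cast; ring)
section Rep

/-- The module underlying the left regular representation of `N_{n,r}`. -/
def Vn (K : Type) (n : ℕ) : Type := (ZMod n × ℕ) → K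

instance : AddCommGroup (Vn K n) := by unfold Vn; infer_instance
instance : Module K (Vn K n) := by unfold Vn; infer_instance

/-- Action of the trivial path `ε i`. -/
def Eop (K : Type) [Field K] (n : ℕ) (i : ZMod n) : Vn K n →ₗ[K] Vn K n where
  toFun f p := if p.1 = i then f p else 0
  map_add' f g := by
    funext p
    show (if p.1 = i then f p + g p else 0) = (if p.1 = i then f p else 0) + (if p.1 = i then g p else 0)
    by_cases h : p.1 = i <;> simp [h, Vn]
  map_smul' c f := by
    funext p
    show (if p.1 = i then c * f p else 0) = c * (if p.1 = i then f p else 0)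
    by_cases h : p.1 = i <;> simp [h, Vn]

/-- Action of the arrow `a i`. -/
def Aop (K : Type) [Field K] (n r : ℕ) (i : ZMod n) : Vn K n →ₗ[K] Vn K n where
  toFun f p := if p.1 = i ∧ 1 ≤ p.2 ∧ p.2 < r then f (i + 1, p.2 - 1) else 0
  map_add' f g := by
    funext p
    show (if p.1 = i ∧ 1 ≤ p.2 ∧ p.2 < r then f (i + 1, p.2 - 1) + g (i + 1, p.2 - 1) else 0) = (if p.1 = i ∧ 1 ≤ p.2 ∧ p.2 < r then f (i + 1, p.2 - 1) else 0) + (if p.1 = i ∧ 1 ≤ p.2 ∧ p.2 < r then g (i + 1, p.2 - 1) else 0)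
    by_cases h : p.1 = i ∧ 1 ≤ p.2 ∧ p.2 < r <;> simp [h, Vn]
  map_smul' c f := by
    funext p
    show (if p.1 = i ∧ 1 ≤ p.2 ∧ p.2 < r then c * f (i + 1, p.2 - 1) else 0) = c * (if p.1 = i ∧ 1 ≤ p.2 ∧ p.2 < r then f (i + 1, p.2 - 1) else 0)
    by_cases h : p.1 = i ∧ 1 ≤ p.2 ∧ p.2 < r <;> simp [h, Vn]

lemma Eop_apply (i : ZMod n) (f : Vn K n) (p : ZMod n × ℕ) :
    Eop K n i f p = if p.1 = i then f p else 0 := rfl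

lemma Aop_apply (i : ZMod n) (f : Vn K n) (p : ZMod n × ℕ) :
    Aop K n r i f p = if p.1 = i ∧ 1 ≤ p.2 ∧ p.2 < r then f (i + 1, p.2 - 1) else 0 := rfl

lemma Aop_prod_apply (i : ZMod n) (l : ℕ) (hl : 1 ≤ l) : ∀ (f : Vn K n) (p : ZMod n × ℕ),
    (((List.range l).map (fun k : ℕ => Aop K n r (i + (k : ZMod n)))).prod) f p
      = if p.1 = i ∧ l ≤ p.2 ∧ p.2 < r then f (i + (l : ZMod n), p.2 - l) else 0 := by
  induction l with
  | zero => omega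
  | succ l ih =>
    intro f p
    rcases Nat.eq_zero_or_pos l with h0 | h0
    · subst h0
      rw [List.range_succ, List.range_zero, List.nil_append, List.map_cons, List.map_nil,
        List.prod_cons, List.prod_nil, mul_one]
      rw [Aop_apply]
      norm_num
    · rw [List.range_succ, List.map_append, List.prod_append, List.map_cons, List.map_nil,
        List.prod_cons, List.prod_nil, mul_one, Module.End.mul_apply]
      rw [ih h0 _ p]
      by_cases h1 : p.1 = i
      · by_cases h3 : p.2 < r
        · by_cases h2 : l ≤ p.2
          · rw [if_pos ⟨h1, h2, h3⟩, Aop_apply]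
            by_cases h4 : l + 1 ≤ p.2
            · rw [if_pos ⟨rfl, by omega, by omega⟩, if_pos ⟨h1, h4, h3⟩]
              congr 1
              refine Prod.ext ?_ ?_
              · show i + (l : ZMod n) + 1 = i + ((l + 1 : ℕ) : ZMod n); push_cast; ring
              · show p.2 - l - 1 = p.2 - (l + 1); omega
            · rw [if_neg (by omega : ¬((i + (l:ZMod n), p.2 - l).1 = i + (l:ZMod n)
                  ∧ 1 ≤ (i + (l:ZMod n), p.2 - l).2 ∧ (i + (l:ZMod n), p.2 - l).2 < r)),
                if_neg (by omega : ¬(p.1 = i ∧ l + 1 ≤ p.2 ∧ p.2 < r))]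
          · rw [if_neg (by omega : ¬(p.1 = i ∧ l ≤ p.2 ∧ p.2 < r)),
              if_neg (by omega : ¬(p.1 = i ∧ l + 1 ≤ p.2 ∧ p.2 < r))]
        · rw [if_neg (by tauto : ¬(p.1 = i ∧ l ≤ p.2 ∧ p.2 < r)),
            if_neg (by tauto : ¬(p.1 = i ∧ l + 1 ≤ p.2 ∧ p.2 < r))]
      · rw [if_neg (by tauto : ¬(p.1 = i ∧ l ≤ p.2 ∧ p.2 < r)),
          if_neg (by tauto : ¬(p.1 = i ∧ l + 1 ≤ p.2 ∧ p.2 < r))]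

def Φfree (K : Type) [Field K] (n r : ℕ) [NeZero n] :
    FreeAlgebra K (ZMod n ⊕ ZMod n) →ₐ[K] Module.End K (Vn K n) :=
  FreeAlgebra.lift K (Sum.elim (Eop K n) (Aop K n r))

lemma Φfree_cyE (i : ZMod n) : Φfree K n r (cyE K n i) = Eop K n i :=
  FreeAlgebra.lift_ι_apply _ _

lemma Φfree_cyA (i : ZMod n) : Φfree K n r (cyA K n i) = Aop K n r i :=
  FreeAlgebra.lift_ι_apply _ _

lemma Φfree_rel (hr : 1 ≤ r) : ∀ x ∈ cycRels K n r, Φfree K n r x = 0 := by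
  intro x hx
  rcases hx with (((((⟨i, rfl⟩ | ⟨i, j, hij, rfl⟩) | hx) | ⟨i, rfl⟩) | ⟨i, rfl⟩) | ⟨i, rfl⟩)
  · rw [map_sub, map_mul, sub_eq_zero, Φfree_cyE]
    refine LinearMap.ext fun f => funext fun p => ?_
    rw [Module.End.mul_apply, Eop_apply, Eop_apply]
    by_cases h : p.1 = i <;> simp [h, Eop_apply]
  · rw [map_mul, Φfree_cyE, Φfree_cyE]
    refine LinearMap.ext fun f => funext fun p => ?_
    rw [Module.End.mul_apply, Eop_apply]
    by_cases h : p.1 = i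
    · rw [if_pos h, Eop_apply, if_neg (by rw [h]; exact hij)]; rfl
    · rw [if_neg h]; rfl
  · rw [Set.mem_singleton_iff] at hx
    subst hx
    rw [map_sub, map_sum, map_one, sub_eq_zero]
    refine LinearMap.ext fun f => funext fun p => ?_
    have : ∀ j : ZMod n, Φfree K n r (cyE K n j) f p = if p.1 = j then f p else 0 :=
      fun j => by rw [Φfree_cyE]; rfl
    rw [LinearMap.sum_apply]
    have happ : (∑ j : ZMod n, (Φfree K n r (cyE K n j)) f) p
        = ∑ j : ZMod n, (Φfree K n r (cyE K n j)) f p := by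
      show (∑ j : ZMod n, (Φfree K n r (cyE K n j)) f : (ZMod n × ℕ) → K) p = _
      exact Finset.sum_apply p Finset.univ _
    rw [happ, Finset.sum_congr rfl (fun j _ => this j),
      Finset.sum_ite_eq Finset.univ p.1 (fun _ => f p), if_pos (Finset.mem_univ _)]
    rfl
  · rw [map_sub, map_mul, sub_eq_zero, Φfree_cyE, Φfree_cyA]
    refine LinearMap.ext fun f => funext fun p => ?_
    rw [Module.End.mul_apply, Eop_apply, Aop_apply]
    split_ifs <;> first | rfl | tauto
  · rw [map_sub, map_mul, sub_eq_zero, Φfree_cyE, Φfree_cyA]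
    refine LinearMap.ext fun f => funext fun p => ?_
    rw [Module.End.mul_apply, Aop_apply, Aop_apply, Eop_apply]
    split_ifs <;> first | rfl | tauto
  · rw [show (List.map (fun k => cyA K n (i + k)) (do
        let a ← List.range r
        pure ((a : ZMod n)))) = (List.range r).map (fun k : ℕ => cyA K n (i + (k : ZMod n)))
      from castListN i r]
    rw [map_list_prod, List.map_map]
    have hmap : (List.range r).map (Φfree K n r ∘ fun k : ℕ => cyA K n (i + (k : ZMod n)))
        = (List.range r).map (fun k : ℕ => Aop K n r (i + (k : ZMod n))) :=
      List.map_congr_left fun k _ => Φfree_cyA _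
    rw [hmap]
    refine LinearMap.ext fun f => funext fun p => ?_
    rw [Aop_prod_apply i r hr f p]
    rw [if_neg (by omega : ¬(p.1 = i ∧ r ≤ p.2 ∧ p.2 < r))]
    rfl

def ΦN (K : Type) [Field K] (n r : ℕ) [NeZero n] (hr : 1 ≤ r) :
    Nalg K n r →ₐ[K] Module.End K (Vn K n) :=
  RingQuot.liftAlgHom K ⟨Φfree K n r, fun x y hxy => by
    rw [Φfree_rel hr x hxy.1, hxy.2, map_zero]⟩

lemma ΦN_mk (hr : 1 ≤ r) (w : FreeAlgebra K (ZMod n ⊕ ZMod n)) :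
    ΦN K n r hr (NalgMk K n r w) = Φfree K n r w :=
  RingQuot.liftAlgHom_mkAlgHom_apply K _ _ w

/-- Delta function at a basis point. -/
def bas (K : Type) [Field K] (n : ℕ) (q : ZMod n × ℕ) : Vn K n :=
  fun p => if p = q then 1 else 0

/-- Coefficient-extraction linear functional. -/
def lam (K : Type) [Field K] (n r : ℕ) [NeZero n] (hr : 1 ≤ r)
    (j : ZMod n) (q : ZMod n × ℕ) : Nalg K n r →ₗ[K] K where
  toFun x := ΦN K n r hr x (bas K n (j, 0)) q
  map_add' x y := by
    show ΦN K n r hr (x + y) (bas K n (j, 0)) q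
      = ΦN K n r hr x (bas K n (j, 0)) q + ΦN K n r hr y (bas K n (j, 0)) q
    rw [map_add]
    rfl
  map_smul' c x := by
    show ΦN K n r hr (c • x) (bas K n (j, 0)) q = c • ΦN K n r hr x (bas K n (j, 0)) q
    rw [map_smul]
    rfl

lemma lam_pN (hr : 1 ≤ r) (i i' : ZMod n) (l l' : ℕ) (hl : l < r) (hl' : l' < r)
    (hl'n : l' < n) :
    lam K n r hr (i' + (l' : ZMod n)) (i', l') (pN K n r i l)
      = if i = i' ∧ l = l' then 1 else 0 := by
  have hcast : ∀ m : ℕ, m < n → ((m : ZMod n) = 0 ↔ m = 0) := by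
    intro m hm
    constructor
    · intro h
      have := ZMod.val_cast_of_lt hm
      rw [h, ZMod.val_zero] at this
      omega
    · rintro rfl; norm_num
  show ΦN K n r hr (pN K n r i l) (bas K n (i' + (l' : ZMod n), 0)) (i', l') = _
  rcases Nat.eq_zero_or_pos l with h0 | h0
  · subst h0
    rw [pN_zero_len, εN, ΦN_mk, Φfree_cyE, Eop_apply]
    by_cases h1 : i' = i
    · rw [if_pos h1, bas]
      by_cases h2 : l' = 0
      · subst h2
        rw [if_pos (show ((i' : ZMod n), (0:ℕ)) = (i' + ((0:ℕ) : ZMod n), 0) by norm_num)]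
        rw [if_pos ⟨h1.symm, rfl⟩]
      · rw [if_neg, if_neg (by omega)]
        intro hc
        rw [Prod.ext_iff] at hc
        obtain ⟨hc1, hc2⟩ := hc
        exact h2 hc2
    · rw [if_neg h1, if_neg (by intro hc; exact h1 hc.1.symm)]
  · rw [pN_eq_arrN _ _ h0, arrN, ΦN_mk, map_list_prod, List.map_map]
    have hmap : (List.range l).map (Φfree K n r ∘ fun k : ℕ => cyA K n (i + (k : ZMod n)))
        = (List.range l).map (fun k : ℕ => Aop K n r (i + (k : ZMod n))) :=
      List.map_congr_left fun k _ => Φfree_cyA _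
    rw [hmap, Aop_prod_apply i l h0]
    by_cases h1 : i' = i
    · subst h1
      by_cases h2 : l = l'
      · subst h2
        rw [if_pos ⟨rfl, le_rfl, hl⟩, bas, if_pos (by simp), if_pos ⟨rfl, rfl⟩]
      · by_cases h3 : l ≤ l'
        · rw [if_pos ⟨rfl, h3, hl'⟩, bas, if_neg, if_neg (by tauto)]
          intro hc
          rw [Prod.ext_iff] at hc
          have : l' - l = 0 := hc.2
          omega
        · rw [if_neg (by omega : ¬((i', l').1 = i' ∧ l ≤ (i', l').2 ∧ (i', l').2 < r)),
            if_neg (by tauto)]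
    · rw [if_neg (by intro hc; exact h1 hc.1), if_neg (by intro hc; exact h1 hc.1.symm)]

end Rep
end CornerProof

open CornerProof in
/-- For `1 ≤ s ≤ n` with `s + r ≤ n + 1` and `e = e₁ + ⋯ + e_s`, the corner
algebra `e N_{n,r} e` is isomorphic as a `K`-algebra to `A(s,r)`: there is an
injective `K`-linear multiplicative map `A(s,r) → N_{n,r}` sending `1` to `e`
whose image is exactly `e N_{n,r} e = {x | e * x * e = x}`. -/
theorem corner_of_nakayama_iso (n r s : ℕ) [NeZero n] [NeZero s]
    (hn : 1 < n) (hr : 1 < r) (hs : 1 ≤ s) (hsn : s ≤ n) (hsr : s + r ≤ n + 1) :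
    ∃ f : Aalg K s r →ₗ[K] Nalg K n r,
      Function.Injective f ∧
      (∀ a b, f (a * b) = f a * f b) ∧
      f 1 = cornerIdem K n r s ∧
      Set.range f =
        {x : Nalg K n r | cornerIdem K n r s * x * cornerIdem K n r s = x} := by
  haveI hFact : Fact (cornerIdem K n r s * cornerIdem K n r s = cornerIdem K n r s) :=
    ⟨e_idem hsn⟩
  have hr1 : (1 : ℕ) ≤ r := by omega
  let fc : Aalg K s r →ₐ[K] CornerT (cornerIdem K n r s) := fC (K := K) (n := n) hr hsn
  let f : Aalg K s r →ₗ[K] Nalg K n r := (CornerT.ι K).comp fc.toLinearMap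
  have hf_apply : ∀ x, f x = (fc x).val := fun x => rfl
  have hmul : ∀ a b, f (a * b) = f a * f b := by
    intro a b
    rw [hf_apply, hf_apply, hf_apply, map_mul, CornerT.val_mul]
  have hone : f 1 = cornerIdem K n r s := by
    rw [hf_apply, map_one, CornerT.val_one]
  -- the image of a valid path
  have hfpA : ∀ (i : Fin s) (l : ℕ), i.1 + l < s →
      f (pA K s r i l) = pN K n r (i.1 : ZMod n) l := by
    intro i l hv
    rw [hf_apply]
    exact fC_pA hr hsn i l hv
  -- injectivity
  have h0 : ∀ x, f x = 0 → x = 0 := by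
    intro x hx0
    have hxs := mem_SA (K := K) hr x
    rw [SA, Submodule.mem_span_range_iff_exists_fun] at hxs
    obtain ⟨c, hc⟩ := hxs
    rw [← hc]
    refine Finset.sum_eq_zero fun q _ => ?_
    by_cases hval : q.1.1 + q.2.1 < s
    · -- show the coefficient vanishes
      have hlim : ∀ m : Fin r, (m : ℕ) < n := fun m => by have := m.2; omega
      set L : Aalg K s r →ₗ[K] K :=
        (lam K n r hr1 ((q.1.1 : ZMod n) + (q.2.1 : ZMod n)) ((q.1.1 : ZMod n), q.2.1)).comp f
        with hL
      have hterm : ∀ q' : Fin s × Fin r,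
          L (pA K s r q'.1 q'.2.1) = if q' = q then 1 else 0 := by
        intro q'
        by_cases hv' : q'.1.1 + q'.2.1 < s
        · have : L (pA K s r q'.1 q'.2.1)
              = lam K n r hr1 ((q.1.1 : ZMod n) + (q.2.1 : ZMod n)) ((q.1.1 : ZMod n), q.2.1)
                (pN K n r (q'.1.1 : ZMod n) q'.2.1) := by
            rw [hL, LinearMap.comp_apply, hfpA q'.1 q'.2.1 hv']
          rw [this, lam_pN hr1 _ _ _ _ q'.2.2 q.2.2 (hlim q.2)]
          by_cases hq : q' = q
          · subst hq
            rw [if_pos ⟨rfl, rfl⟩, if_pos rfl]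
          · rw [if_neg, if_neg hq]
            rintro ⟨hc1, hc2⟩
            exact hq (Prod.ext (Fin.ext (zmodCast_inj hsn q'.1.2 q.1.2 hc1))
              (Fin.ext hc2))
        · rw [pA_invalid _ (by omega), map_zero, if_neg]
          intro hq
          rw [hq] at hv'
          exact hv' hval
      have hLx : L x = 0 := by rw [hL, LinearMap.comp_apply, hx0, map_zero]
      have hLx2 : L x = c q := by
        rw [← hc, map_sum]
        rw [Finset.sum_congr rfl (fun q' _ => by rw [map_smul, hterm q', smul_eq_mul])]
        rw [Finset.sum_congr rfl (fun q' _ => by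
          rw [mul_ite, mul_one, mul_zero] : ∀ q' ∈ Finset.univ,
            c q' * (if q' = q then 1 else 0) = if q' = q then c q' else 0)]
        rw [Finset.sum_ite_eq' Finset.univ q c, if_pos (Finset.mem_univ _)]
      rw [hLx] at hLx2
      rw [← hLx2, zero_smul]
    · rw [pA_invalid _ (by omega), smul_zero]
  have hinj : Function.Injective f := by
    intro a b hab
    have := h0 (a - b) (by rw [map_sub, hab, sub_self])
    exact sub_eq_zero.1 this
  -- range
  have hrange : Set.range f
      = {x : Nalg K n r | cornerIdem K n r s * x * cornerIdem K n r s = x} := by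
    ext y
    constructor
    · rintro ⟨x, rfl⟩
      show cornerIdem K n r s * f x * cornerIdem K n r s = f x
      rw [hf_apply]
      exact (fc x).prop
    · intro hy
      have hyy : cornerIdem K n r s * y * cornerIdem K n r s = y := hy
      have key : ∀ z : Nalg K n r, z ∈ SN K n r →
          cornerIdem K n r s * z * cornerIdem K n r s ∈ Set.range f := by
        intro z hzS
        induction hzS using Submodule.span_induction with
        | mem z hz =>
          obtain ⟨⟨i, l⟩, rfl⟩ := hz
          by_cases hi : i.val < s
          · have hirw : ((i.val : ℕ) : ZMod n) = i := ZMod.natCast_rightInverse i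
            have hel : cornerIdem K n r s * pN K n r i l.1 = pN K n r i l.1 := by
              have h := e_mul_pN (K := K) (n := n) (r := r) hsn hi l.1
              rw [hirw] at h
              exact h
            have hsum : i.val + l.1 < n := by
              have h1 := l.2
              omega
            have hplus : i + (l.1 : ZMod n) = ((i.val + l.1 : ℕ) : ZMod n) := by
              conv_lhs => rw [← hirw]
              push_cast
              ring
            by_cases hil : (i + (l.1 : ZMod n)).val < s
            · have hval2 : (i + (l.1 : ZMod n)).val = i.val + l.1 := by
                rw [hplus, ZMod.val_cast_of_lt hsum]
              have hvalid : i.val + l.1 < s := by omega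
              refine ⟨pA K s r ⟨i.val, hi⟩ l.1, ?_⟩
              rw [hfpA ⟨i.val, hi⟩ l.1 hvalid]
              show pN K n r ((i.val : ℕ) : ZMod n) l.1 = _
              rw [hirw, hel, pN_mul_e hsn i l.1 hvalid hplus.symm]
            · have hz : pN K n r i l.1 * cornerIdem K n r s = 0 := by
                refine pN_mul_e_zero hsn i l.1 fun j hj hc => ?_
                have hv := congrArg ZMod.val hc
                rw [ZMod.val_cast_of_lt (by omega : j < n)] at hv
                omega
              exact ⟨0, by rw [map_zero, hel, hz]⟩
          · have hz : cornerIdem K n r s * pN K n r i l.1 = 0 := by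
              refine e_mul_pN_zero hsn (fun j hj hc => ?_) l.1
              have hv := congrArg ZMod.val hc
              rw [ZMod.val_cast_of_lt (by omega : j < n)] at hv
              omega
            exact ⟨0, by rw [map_zero, hz, zero_mul]⟩
        | zero => exact ⟨0, by rw [map_zero, mul_zero, zero_mul]⟩
        | add a b _ _ ha hb =>
          obtain ⟨xa, hxa⟩ := ha
          obtain ⟨xb, hxb⟩ := hb
          exact ⟨xa + xb, by rw [map_add, hxa, hxb, mul_add, add_mul]⟩
        | smul a z _ hzz =>
          obtain ⟨xz, hxz⟩ := hzz
          exact ⟨a • xz, by rw [map_smul, hxz, mul_smul_comm, smul_mul_assoc]⟩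
      have := key y (mem_SN (K := K) hr y)
      rw [hyy] at this
      exact this
  exact ⟨f, hinj, hmul, hone, hrange⟩

end
end

section
/- Let Λ be a hereditary ring (every submodule of a projective right Λ-module is projective) and e an idempotent of Λ. Then the ideal ΛeΛ is projective as a right Λ-module, and hence the canonical map Λ → Λ/ΛeΛ is a homological epimorphism. -/
open CategoryTheory

noncomputable section

variable (Λ : Type) [Ring Λ] (e : Λ)

/-- The relation generating the two-sided ideal `ΛeΛ`. -/
def eRel : Λ → Λ → Prop := fun a b => a = e ∧ b = 0

/-- The quotient ring `Γ = Λ/ΛeΛ`. -/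
def Qe : Type := RingQuot (eRel Λ e)

instance : Ring (Qe Λ e) := by unfold Qe; infer_instance

/-- The canonical (homological epimorphism) projection `π : Λ → Λ/ΛeΛ`. -/
def qeMk : Λ →+* Qe Λ e := RingQuot.mkRingHom (eRel Λ e)

/-- `Γ = Λ/ΛeΛ` as a right `Λ`-module (i.e. a `Λᵐᵒᵖ`-module) via `π`. -/
instance : Module Λᵐᵒᵖ (Qe Λ e) := Module.compHom _ (RingHom.op (qeMk Λ e))

/-- Defining relations of the tensor product `M ⊗_Λ Γ` of a right `Λ`-module
`M` with `Γ = Λ/ΛeΛ`: biadditivity and balancedness over `Λ`. -/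
def tgRels (M : ModuleCat Λᵐᵒᵖ) : Set (FreeAbelianGroup (M × Qe Λ e)) :=
  {x | ∃ (m m' : M) (g : Qe Λ e), x = .of (m + m', g) - .of (m, g) - .of (m', g)} ∪
  {x | ∃ (m : M) (g g' : Qe Λ e), x = .of (m, g + g') - .of (m, g) - .of (m, g')} ∪
  {x | ∃ (m : M) (l : Λ) (g : Qe Λ e),
    x = .of ((MulOpposite.op l) • m, g) - .of (m, qeMk Λ e l * g)}

/-- The tensor product `M ⊗_Λ Γ` (an abelian group). -/
def TG (M : ModuleCat Λᵐᵒᵖ) : Type :=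
  FreeAbelianGroup (M × Qe Λ e) ⧸ AddSubgroup.closure (tgRels Λ e M)

instance (M : ModuleCat Λᵐᵒᵖ) : AddCommGroup (TG Λ e M) := by
  unfold TG; infer_instance

/-- The elementary tensor `m ⊗ g` in `M ⊗_Λ Γ`. -/
def mkTG {M : ModuleCat Λᵐᵒᵖ} (m : M) (g : Qe Λ e) : TG Λ e M :=
  QuotientAddGroup.mk (FreeAbelianGroup.of (m, g))

/-- Functoriality of `- ⊗_Λ Γ`. -/
def TGmap {M N : ModuleCat Λᵐᵒᵖ} (f : M ⟶ N) : TG Λ e M →+ TG Λ e N :=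
  QuotientAddGroup.map _ _ (FreeAbelianGroup.map (Prod.map f id)) (by
    rw [AddSubgroup.closure_le]
    rintro x (((⟨m, m', g, rfl⟩) | (⟨m, g, g', rfl⟩)) | (⟨m, l, g, rfl⟩)) <;>
      refine AddSubgroup.mem_comap.mpr (AddSubgroup.subset_closure ?_) <;>
      simp only [map_sub, FreeAbelianGroup.map_of_apply, Prod.map_apply, id_eq,
        map_add, map_smul]
    · exact Or.inl (Or.inl ⟨f m, f m', g, rfl⟩)
    · exact Or.inl (Or.inr ⟨f m, g, g', rfl⟩)
    · exact Or.inr ⟨f m, l, g, rfl⟩)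

/-- The tensor functor `- ⊗_Λ Γ : Mod-Λ ⥤ Ab`. -/
def TGfunctor : ModuleCat Λᵐᵒᵖ ⥤ AddCommGrpCat where
  obj M := AddCommGrpCat.of (TG Λ e M)
  map f := AddCommGrpCat.ofHom (TGmap Λ e f)
  map_id := by
    intro M
    refine AddCommGrpCat.ext fun x => QuotientAddGroup.induction_on x fun z => ?_
    have h : Prod.map (⇑(𝟙 M)) (id : Qe Λ e → Qe Λ e) = id := by
      funext p; cases p; simp
    show (QuotientAddGroup.mk _ : TG Λ e M) = QuotientAddGroup.mk z
    rw [h, FreeAbelianGroup.map_id, AddMonoidHom.id_apply]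
  map_comp := by
    intro M N P f g
    refine AddCommGrpCat.ext fun x => QuotientAddGroup.induction_on x fun z => ?_
    have h : Prod.map (⇑(f ≫ g)) (id : Qe Λ e → Qe Λ e) =
        (Prod.map (⇑g) id) ∘ (Prod.map (⇑f) id) := by
      funext p; cases p; simp
    show (QuotientAddGroup.mk _ : TG Λ e P) = QuotientAddGroup.mk _
    rw [h, FreeAbelianGroup.map_comp, AddMonoidHom.comp_apply]

instance : (TGfunctor Λ e).Additive := by
  constructor
  intro M N f g
  refine AddCommGrpCat.ext fun x => QuotientAddGroup.induction_on x fun z => ?_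
  show TGmap Λ e (f + g) ((QuotientAddGroup.mk z : TG Λ e M)) =
    TGmap Λ e f (QuotientAddGroup.mk z) + TGmap Λ e g (QuotientAddGroup.mk z)
  induction z using FreeAbelianGroup.induction_on with
  | zero =>
    show TGmap Λ e (f + g) (0 : TG Λ e M) = TGmap Λ e f (0 : TG Λ e M) + TGmap Λ e g (0 : TG Λ e M)
    simp only [map_zero, add_zero]
  | of p =>
    obtain ⟨m, γ⟩ := p
    show (QuotientAddGroup.mk (FreeAbelianGroup.of ((f + g) m, γ)) : TG Λ e N) =
      QuotientAddGroup.mk (FreeAbelianGroup.of (f m, γ)) +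
        QuotientAddGroup.mk (FreeAbelianGroup.of (g m, γ))
    show (QuotientAddGroup.mk (FreeAbelianGroup.of ((f + g) m, γ)) : TG Λ e N) =
      QuotientAddGroup.mk (FreeAbelianGroup.of (f m, γ) + FreeAbelianGroup.of (g m, γ))
    rw [QuotientAddGroup.eq]
    have hgen : FreeAbelianGroup.of ((f m + g m : N), γ) -
        FreeAbelianGroup.of ((f m : N), γ) - FreeAbelianGroup.of ((g m : N), γ) ∈
        tgRels Λ e N := Or.inl (Or.inl ⟨f m, g m, γ, rfl⟩)
    have h2 := neg_mem (AddSubgroup.subset_closure hgen)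
    convert h2 using 1
    have hfg : ((f + g) m : N) = f m + g m := rfl
    rw [hfg]
    abel
  | neg p hp =>
    erw [QuotientAddGroup.mk_neg, map_neg, map_neg, map_neg, hp]
    abel
  | add p q hp hq =>
    erw [QuotientAddGroup.mk_add, map_add, map_add, map_add, hp, hq]
    abel

/-- `Γ = Λ/ΛeΛ` as an object of the category of right `Λ`-modules. -/
def Γmod : ModuleCat Λᵐᵒᵖ := @ModuleCat.of Λᵐᵒᵖ _ (Qe Λ e) _ (instModuleMulOppositeQe Λ e)

/-- The right `Λ`-submodule `ΛeΛ` of `Λ` (generated by `Λe`). -/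
def IeΛ : Submodule Λᵐᵒᵖ Λ := Submodule.span Λᵐᵒᵖ {x : Λ | ∃ a : Λ, x = a * e}

/-! ### Auxiliary lemmas -/

section Aux

open MulOpposite

theorem qeMk_e : qeMk Λ e e = 0 := by
  have h : qeMk Λ e e = qeMk Λ e 0 := RingQuot.mkRingHom_rel ⟨rfl, rfl⟩
  rw [h, map_zero]

theorem qeMk_surj : Function.Surjective (qeMk Λ e) :=
  RingQuot.mkRingHom_surjective _

theorem mkTG_rel {M : ModuleCat Λᵐᵒᵖ} {x y : FreeAbelianGroup (M × Qe Λ e)}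
    (h : x - y ∈ AddSubgroup.closure (tgRels Λ e M)) :
    (QuotientAddGroup.mk x : TG Λ e M) = QuotientAddGroup.mk y := by
  rw [QuotientAddGroup.eq]
  convert neg_mem h using 1
  abel

theorem mkTG_add_left {M : ModuleCat Λᵐᵒᵖ} (m m' : M) (g : Qe Λ e) :
    mkTG Λ e (m + m') g = mkTG Λ e m g + mkTG Λ e m' g := by
  show _ = (QuotientAddGroup.mk _ + QuotientAddGroup.mk _ : TG Λ e M)
  erw [← QuotientAddGroup.mk_add]
  apply mkTG_rel
  have h : FreeAbelianGroup.of (m + m', g) -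
      (FreeAbelianGroup.of (m, g) + FreeAbelianGroup.of (m', g)) =
      FreeAbelianGroup.of (m + m', g) - FreeAbelianGroup.of (m, g) -
      FreeAbelianGroup.of (m', g) := by abel
  rw [h]
  exact AddSubgroup.subset_closure (Or.inl (Or.inl ⟨m, m', g, rfl⟩))

theorem mkTG_add_right {M : ModuleCat Λᵐᵒᵖ} (m : M) (g g' : Qe Λ e) :
    mkTG Λ e m (g + g') = mkTG Λ e m g + mkTG Λ e m g' := by
  show _ = (QuotientAddGroup.mk _ + QuotientAddGroup.mk _ : TG Λ e M)
  erw [← QuotientAddGroup.mk_add]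
  apply mkTG_rel
  have h : FreeAbelianGroup.of (m, g + g') -
      (FreeAbelianGroup.of (m, g) + FreeAbelianGroup.of (m, g')) =
      FreeAbelianGroup.of (m, g + g') - FreeAbelianGroup.of (m, g) -
      FreeAbelianGroup.of (m, g') := by abel
  rw [h]
  exact AddSubgroup.subset_closure (Or.inl (Or.inr ⟨m, g, g', rfl⟩))

theorem mkTG_smul {M : ModuleCat Λᵐᵒᵖ} (m : M) (l : Λ) (g : Qe Λ e) :
    mkTG Λ e ((MulOpposite.op l) • m) g = mkTG Λ e m (qeMk Λ e l * g) :=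
  mkTG_rel Λ e (AddSubgroup.subset_closure (Or.inr ⟨m, l, g, rfl⟩))

theorem mkTG_zero_right {M : ModuleCat Λᵐᵒᵖ} (m : M) :
    mkTG Λ e m (0 : Qe Λ e) = 0 := by
  have h := mkTG_add_right Λ e m (0 : Qe Λ e) 0
  rw [add_zero] at h
  have h2 : mkTG Λ e m (0 : Qe Λ e) + 0 = mkTG Λ e m 0 + mkTG Λ e m 0 := by
    rw [add_zero]; exact h
  exact (add_left_cancel h2).symm

theorem mkTG_zero_left {M : ModuleCat Λᵐᵒᵖ} (g : Qe Λ e) :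
    mkTG Λ e (0 : M) g = 0 := by
  have h := mkTG_add_left Λ e (0 : M) 0 g
  rw [add_zero] at h
  have h2 : mkTG Λ e (0 : M) g + 0 = mkTG Λ e (0 : M) g + mkTG Λ e (0 : M) g := by
    rw [add_zero]; exact h
  exact (add_left_cancel h2).symm

/-- Identity function from the carrier of `Γmod` to `Qe`. -/
def toQe : (Γmod Λ e) → Qe Λ e := fun x => x

theorem toQe_smul (l : Λ) (a : Γmod Λ e) :
    toQe Λ e ((MulOpposite.op l) • a) = toQe Λ e a * qeMk Λ e l := rfl

theorem mkTG_toQe (a : Γmod Λ e) (b : Qe Λ e) :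
    mkTG Λ e (M := Γmod Λ e) a b = mkTG Λ e (M := Γmod Λ e) (toQe Λ e a) b := rfl

theorem mkTG_mul_one (a b : Qe Λ e) :
    mkTG Λ e (M := Γmod Λ e) a b = mkTG Λ e (M := Γmod Λ e) (a * b) 1 := by
  obtain ⟨l, rfl⟩ := qeMk_surj Λ e b
  have h := mkTG_smul Λ e (M := Γmod Λ e) a l 1
  rw [mul_one] at h
  erw [← h, mkTG_toQe, toQe_smul]

/-- The underlying additive map of the multiplication on the free abelian group. -/
def mulFree : FreeAbelianGroup ((Γmod Λ e) × Qe Λ e) →+ Qe Λ e :=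
  FreeAbelianGroup.lift (fun p => toQe Λ e p.1 * p.2)

theorem mulFree_ker : AddSubgroup.closure (tgRels Λ e (Γmod Λ e)) ≤
    (mulFree Λ e).ker := by
  rw [AddSubgroup.closure_le]
  rintro x (((⟨m, m', g, rfl⟩) | (⟨m, g, g', rfl⟩)) | (⟨m, l, g, rfl⟩)) <;>
    simp only [SetLike.mem_coe, AddMonoidHom.mem_ker, map_sub, mulFree,
      FreeAbelianGroup.lift_apply_of]
  · show (toQe Λ e m + toQe Λ e m') * g - toQe Λ e m * g - toQe Λ e m' * g = 0
    rw [add_mul]; abel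
  · show toQe Λ e m * (g + g') - toQe Λ e m * g - toQe Λ e m * g' = 0
    rw [mul_add]; abel
  · show (toQe Λ e m * qeMk Λ e l) * g - toQe Λ e m * (qeMk Λ e l * g) = 0
    rw [mul_assoc]; abel

/-- The multiplication map `Γ ⊗_Λ Γ → Γ`. -/
def mulHom : TG Λ e (Γmod Λ e) →+ Qe Λ e :=
  QuotientAddGroup.lift _ (mulFree Λ e) (mulFree_ker Λ e)

theorem mulHom_mkTG (a b : Qe Λ e) :
    mulHom Λ e (mkTG Λ e (M := Γmod Λ e) a b) = a * b := by
  show mulFree Λ e (FreeAbelianGroup.of (_, _)) = a * b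
  exact FreeAbelianGroup.lift_apply_of _ _

/-- The section `g ↦ g ⊗ 1` of the multiplication map. -/
def oneSec : Qe Λ e →+ TG Λ e (Γmod Λ e) :=
  AddMonoidHom.mk' (fun g => mkTG Λ e (M := Γmod Λ e) g 1)
    (fun a b => mkTG_add_left Λ e (M := Γmod Λ e) a b 1)

theorem oneSec_mulHom (x : TG Λ e (Γmod Λ e)) :
    oneSec Λ e (mulHom Λ e x) = x := by
  refine QuotientAddGroup.induction_on x fun z => ?_
  induction z using FreeAbelianGroup.induction_on with
  | zero => exact (congrArg (oneSec Λ e) (map_zero (mulHom Λ e))).trans (map_zero _)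
  | of p =>
    obtain ⟨a, b⟩ := p
    show oneSec Λ e (mulHom Λ e (mkTG Λ e (M := Γmod Λ e) a b)) = _
    erw [mulHom_mkTG]
    exact (mkTG_mul_one Λ e a b).symm
  | neg p hp =>
    erw [QuotientAddGroup.mk_neg, map_neg, map_neg, hp]
    rfl
  | add p q hp hq =>
    erw [QuotientAddGroup.mk_add, map_add, map_add, hp, hq]
    rfl

theorem mulHom_bijective : Function.Bijective (mulHom Λ e) := by
  constructor
  · intro x y h
    rw [← oneSec_mulHom Λ e x, ← oneSec_mulHom Λ e y, h]
  · intro g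
    exact ⟨mkTG Λ e (M := Γmod Λ e) g 1, by rw [mulHom_mkTG, mul_one]⟩

theorem mem_IeΛ_of_form (a b : Λ) : a * e * b ∈ IeΛ Λ e := by
  have h : (MulOpposite.op b) • (a * e) ∈ IeΛ Λ e :=
    Submodule.smul_mem _ _ (Submodule.subset_span ⟨a, rfl⟩)
  exact h

theorem IeΛ_mul_left_mem (c : Λ) {x : Λ} (hx : x ∈ IeΛ Λ e) : c * x ∈ IeΛ Λ e := by
  induction hx using Submodule.span_induction with
  | mem y hy =>
    obtain ⟨a, rfl⟩ := hy
    rw [← mul_assoc]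
    exact Submodule.subset_span ⟨c * a, rfl⟩
  | zero => rw [mul_zero]; exact Submodule.zero_mem _
  | add y z _ _ hy hz => rw [mul_add]; exact Submodule.add_mem _ hy hz
  | smul b y _ hy =>
    have h : c * (b • y) = b • (c * y) := by
      show c * (y * b.unop) = (c * y) * b.unop
      rw [mul_assoc]
    rw [h]
    exact Submodule.smul_mem _ _ hy

theorem rel_sub_mem {a b : Λ} (h : RingQuot.Rel (eRel Λ e) a b) :
    a - b ∈ IeΛ Λ e := by
  induction h with
  | of h =>
    obtain ⟨ha, hb⟩ := h
    rw [ha, hb, sub_zero]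
    have h1 : (1 : Λ) * e * 1 ∈ IeΛ Λ e := mem_IeΛ_of_form Λ e 1 1
    rwa [one_mul, mul_one] at h1
  | add_left _ ih =>
    rwa [add_sub_add_right_eq_sub]
  | mul_left _ ih =>
    rename_i a' b' c' _
    rw [← sub_mul]
    have h2 : (MulOpposite.op c') • (a' - b') ∈ IeΛ Λ e :=
      Submodule.smul_mem _ _ ih
    exact h2
  | mul_right _ ih =>
    rw [← mul_sub]
    exact IeΛ_mul_left_mem Λ e _ ih

theorem eqvGen_sub_mem {a b : Λ}
    (h : Relation.EqvGen (RingQuot.Rel (eRel Λ e)) a b) : a - b ∈ IeΛ Λ e := by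
  induction h with
  | rel _ _ h => exact rel_sub_mem Λ e h
  | refl x => rw [sub_self]; exact Submodule.zero_mem _
  | symm x y _ ih =>
    have h2 : -(x - y) ∈ IeΛ Λ e := Submodule.neg_mem _ ih
    rwa [neg_sub] at h2
  | trans x y z _ _ ihxy ihyz =>
    have h2 := Submodule.add_mem _ ihxy ihyz
    rwa [sub_add_sub_cancel] at h2

theorem qeMk_eq_zero_iff (x : Λ) : qeMk Λ e x = 0 ↔ x ∈ IeΛ Λ e := by
  constructor
  · intro h
    have h0 : qeMk Λ e x = qeMk Λ e 0 := by rw [h, map_zero]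
    rw [qeMk, RingQuot.mkRingHom_def] at h0
    have h1 : Relation.EqvGen (RingQuot.Rel (eRel Λ e)) x 0 :=
      Quot.eqvGen_exact (congrArg RingQuot.toQuot h0)
    have h2 := eqvGen_sub_mem Λ e h1
    rwa [sub_zero] at h2
  · intro hx
    induction hx using Submodule.span_induction with
    | mem y hy =>
      obtain ⟨a, rfl⟩ := hy
      rw [map_mul, qeMk_e, mul_zero]
    | zero => exact map_zero _
    | add y z _ _ hy hz => rw [map_add, hy, hz, add_zero]
    | smul b y _ hy =>
      show qeMk Λ e (y * b.unop) = 0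
      rw [map_mul, hy, zero_mul]

theorem mkTG_IeΛ_eq_zero (he : IsIdempotentElem e)
    (m : ModuleCat.of Λᵐᵒᵖ (IeΛ Λ e)) (g : Qe Λ e) :
    mkTG Λ e m g = 0 := by
  obtain ⟨x, hx⟩ := m
  revert g
  induction hx using Submodule.span_induction with
  | mem y hy =>
    obtain ⟨a, rfl⟩ := hy
    intro g
    have hsub : (⟨a * e, Submodule.subset_span ⟨a, rfl⟩⟩ :
        ModuleCat.of Λᵐᵒᵖ (IeΛ Λ e)) =
        (MulOpposite.op e) • ⟨a * e, Submodule.subset_span ⟨a, rfl⟩⟩ := by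
      apply Subtype.ext
      show a * e = (a * e) * e
      rw [mul_assoc, he]
    rw [hsub, mkTG_smul, qeMk_e, zero_mul, mkTG_zero_right]
  | zero =>
    intro g
    exact mkTG_zero_left Λ e g
  | add y z hy hz ihy ihz =>
    intro g
    have hadd : (⟨y + z, Submodule.add_mem _ hy hz⟩ :
        ModuleCat.of Λᵐᵒᵖ (IeΛ Λ e)) = ⟨y, hy⟩ + ⟨z, hz⟩ := rfl
    rw [hadd, mkTG_add_left, ihy, ihz, add_zero]
  | smul b y hy ihy =>
    intro g
    have hsmul : (⟨b • y, Submodule.smul_mem _ b hy⟩ :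
        ModuleCat.of Λᵐᵒᵖ (IeΛ Λ e)) = b • ⟨y, hy⟩ := rfl
    rw [hsmul, ← MulOpposite.op_unop b, mkTG_smul, ihy]

theorem subsingleton_TG_IeΛ (he : IsIdempotentElem e) :
    Subsingleton (TG Λ e (ModuleCat.of Λᵐᵒᵖ (IeΛ Λ e))) := by
  have hz : ∀ x : TG Λ e (ModuleCat.of Λᵐᵒᵖ (IeΛ Λ e)), x = 0 := by
    intro x
    refine QuotientAddGroup.induction_on x fun z => ?_
    induction z using FreeAbelianGroup.induction_on with
    | zero => rfl
    | of p =>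
      obtain ⟨m, g⟩ := p
      exact mkTG_IeΛ_eq_zero Λ e he m g
    | neg p hp =>
      erw [QuotientAddGroup.mk_neg, hp, neg_zero]
      rfl
    | add p q hp hq =>
      erw [QuotientAddGroup.mk_add, hp, hq, add_zero]
  exact subsingleton_of_forall_eq 0 fun x => hz x

/-- The inclusion `ΛeΛ → Λ` as a morphism of `ModuleCat Λᵐᵒᵖ`. -/
def ιhom : ModuleCat.of Λᵐᵒᵖ (IeΛ Λ e) ⟶ ModuleCat.of Λᵐᵒᵖ Λ :=
  ModuleCat.ofHom (IeΛ Λ e).subtype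

/-- `π : Λ → Γ` as a `Λᵐᵒᵖ`-linear map. -/
def qeLin : Λ →ₗ[Λᵐᵒᵖ] Γmod Λ e where
  toFun := qeMk Λ e
  map_add' x y := map_add _ x y
  map_smul' l x :=
    show qeMk Λ e (x * l.unop) = qeMk Λ e x * qeMk Λ e l.unop from
      map_mul (qeMk Λ e) x l.unop

/-- `π : Λ → Γ` as a morphism of `ModuleCat Λᵐᵒᵖ`. -/
def p0 : ModuleCat.of Λᵐᵒᵖ Λ ⟶ Γmod Λ e := ModuleCat.ofHom (X := Λ) (Y := ↑(Γmod Λ e)) (qeLin Λ e)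

theorem ιhom_comp_p0 : ιhom Λ e ≫ p0 Λ e = 0 := by
  refine ModuleCat.hom_ext (LinearMap.ext ?_)
  rintro ⟨x, hx⟩
  show qeMk Λ e x = 0
  exact (qeMk_eq_zero_iff Λ e x).2 hx

/-- The objects of the projective resolution of `Γ`. -/
def resX : ℕ → ModuleCat Λᵐᵒᵖ
  | 0 => ModuleCat.of Λᵐᵒᵖ Λ
  | 1 => ModuleCat.of Λᵐᵒᵖ (IeΛ Λ e)
  | _ + 2 => ModuleCat.of Λᵐᵒᵖ PUnit

/-- The differentials of the projective resolution of `Γ`. -/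
def resD : ∀ n : ℕ, resX Λ e (n + 1) ⟶ resX Λ e n
  | 0 => ιhom Λ e
  | _ + 1 => 0

/-- The complex `⋯ → 0 → ΛeΛ → Λ`. -/
def resComplex : ChainComplex (ModuleCat Λᵐᵒᵖ) ℕ :=
  ChainComplex.of (resX Λ e) (resD Λ e) (fun n => by
    show (0 : resX Λ e (n + 2) ⟶ resX Λ e (n + 1)) ≫ _ = 0
    exact Limits.zero_comp)

theorem resComplex_d10 : (resComplex Λ e).d 1 0 = ιhom Λ e :=
  ChainComplex.of_d (resX Λ e) (resD Λ e) 0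

theorem resComplex_d21 (n : ℕ) : (resComplex Λ e).d (n + 2) (n + 1) = 0 :=
  ChainComplex.of_d (resX Λ e) (resD Λ e) (n + 1)

theorem res_exact :
    (ShortComplex.mk (ιhom Λ e) (p0 Λ e) (ιhom_comp_p0 Λ e)).Exact := by
  rw [ShortComplex.moduleCat_exact_iff]
  intro x hx
  exact ⟨⟨x, (qeMk_eq_zero_iff Λ e x).1 hx⟩, rfl⟩

theorem res_epi : Epi (ShortComplex.mk (ιhom Λ e) (p0 Λ e) (ιhom_comp_p0 Λ e)).g := by
  rw [ModuleCat.epi_iff_surjective]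
  exact qeMk_surj Λ e

theorem resComplex_cond : (resComplex Λ e).d 1 0 ≫ p0 Λ e = 0 := by
  rw [resComplex_d10]
  exact ιhom_comp_p0 Λ e

/-- The projective resolution `⋯ → 0 → ΛeΛ → Λ → Γ`. -/
def resolution (he : IsIdempotentElem e)
    (hhered : ∀ I : Submodule Λᵐᵒᵖ Λ, Module.Projective Λᵐᵒᵖ I) :
    ProjectiveResolution (Γmod Λ e) where
  complex := resComplex Λ e
  projective n := by
    match n with
    | 0 =>
      refine (IsProjective.iff_projective _).mp ?_
      letI := hhered ⊤
      exact Module.Projective.of_equiv (Submodule.topEquiv (R := Λᵐᵒᵖ) (M := Λ))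
    | 1 => exact (IsProjective.iff_projective _).mp (hhered (IeΛ Λ e))
    | (n + 2) =>
      haveI : Subsingleton ((resComplex Λ e).X (n + 2)) :=
        inferInstanceAs (Subsingleton PUnit)
      exact Limits.IsZero.projective (ModuleCat.isZero_of_subsingleton _)
  π := (ChainComplex.toSingle₀Equiv _ _).symm ⟨p0 Λ e, resComplex_cond Λ e⟩
  quasiIso := ⟨fun n => by
    cases n with
    | zero =>
      rw [ChainComplex.quasiIsoAt₀_iff, ShortComplex.quasiIso_iff_of_zeros']
      · refine (ShortComplex.exact_and_epi_g_iff_of_iso ?_).2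
          ⟨res_exact Λ e, res_epi Λ e⟩
        refine ShortComplex.isoMk (Iso.refl _) (Iso.refl _) (Iso.refl _) ?_ ?_
        · show 𝟙 _ ≫ ιhom Λ e = (resComplex Λ e).d 1 0 ≫ 𝟙 _
          erw [resComplex_d10, Category.comp_id, Category.id_comp]
        · show 𝟙 _ ≫ p0 Λ e =
            (((resComplex Λ e).toSingle₀Equiv (Γmod Λ e)).symm
              ⟨p0 Λ e, resComplex_cond Λ e⟩).f 0 ≫ 𝟙 _
          erw [ChainComplex.toSingle₀Equiv_symm_apply_f_zero, Category.comp_id,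
            Category.id_comp]
      all_goals rfl
    | succ n =>
      rw [quasiIsoAt_iff_exactAt' _ _ (ChainComplex.exactAt_succ_single_obj _ _)]
      rw [HomologicalComplex.exactAt_iff' _ (n + 2) (n + 1) n (by simp) (by simp)]
      cases n with
      | zero =>
        refine (ShortComplex.exact_iff_mono _ ?_).2 ?_
        · show (resComplex Λ e).d 2 1 = 0
          exact resComplex_d21 Λ e 0
        · show Mono ((resComplex Λ e).d 1 0)
          erw [resComplex_d10, ιhom, ModuleCat.mono_iff_injective]
          exact Subtype.val_injective
      | succ m =>
        refine ShortComplex.exact_of_isZero_X₂ _ ?_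
        haveI : Subsingleton
            ((HomologicalComplex.sc' (resComplex Λ e) (m + 1 + 2) (m + 1 + 1) (m + 1)).X₂) :=
          inferInstanceAs (Subsingleton PUnit)
        exact ModuleCat.isZero_of_subsingleton _⟩

theorem isZero_TG_of_subsingleton (M : ModuleCat Λᵐᵒᵖ)
    [hs : Subsingleton (TG Λ e M)] :
    Limits.IsZero ((TGfunctor Λ e).obj M) :=
  @AddCommGrpCat.isZero_of_subsingleton ((TGfunctor Λ e).obj M) hs

end Aux

/-- Let `Λ` be a (right) hereditary ring (every right ideal is projective as
a right module) and `e` an idempotent of `Λ`.  Then the ideal `ΛeΛ` is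
projective as a right `Λ`-module, and hence the canonical map `Λ → Λ/ΛeΛ` is
a homological epimorphism: the multiplication map
`(Λ/ΛeΛ) ⊗_Λ (Λ/ΛeΛ) → Λ/ΛeΛ` is an isomorphism and
`Tor_i^Λ(Λ/ΛeΛ, Λ/ΛeΛ) = 0` for all `i > 0`, where `Tor_i` is the `i`-th
left derived functor of `- ⊗_Λ (Λ/ΛeΛ)`. -/
theorem hereditary_homological_epi
    (he : IsIdempotentElem e)
    (hhered : ∀ I : Submodule Λᵐᵒᵖ Λ, Module.Projective Λᵐᵒᵖ I) :
    Module.Projective Λᵐᵒᵖ (IeΛ Λ e) ∧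
    (∃ m : TG Λ e (Γmod Λ e) →+ Qe Λ e,
        (∀ a b : Qe Λ e, m (mkTG Λ e a b) = a * b) ∧ Function.Bijective m) ∧
    (∀ i : ℕ, 0 < i →
      Limits.IsZero (((TGfunctor Λ e).leftDerived i).obj (Γmod Λ e))) := by
  refine ⟨hhered (IeΛ Λ e),
    ⟨mulHom Λ e, mulHom_mkTG Λ e, mulHom_bijective Λ e⟩, ?_⟩
  intro i hi
  obtain ⟨n, rfl⟩ : ∃ n, i = n + 1 := ⟨i - 1, (Nat.succ_pred_eq_of_pos hi).symm⟩
  refine Limits.IsZero.of_iso ?_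
    ((resolution Λ e he hhered).isoLeftDerivedObj (TGfunctor Λ e) (n + 1))
  erw [← HomologicalComplex.exactAt_iff_isZero_homology]
  rw [HomologicalComplex.exactAt_iff' _ (n + 2) (n + 1) n (by simp) (by simp)]
  refine ShortComplex.exact_of_isZero_X₂ _ ?_
  cases n with
  | zero =>
    haveI : Subsingleton (TG Λ e ((resolution Λ e he hhered).complex.X 1)) :=
      subsingleton_TG_IeΛ Λ e he
    exact isZero_TG_of_subsingleton Λ e _
  | succ m =>
    refine (TGfunctor Λ e).map_isZero ?_
    haveI : Subsingleton ((resolution Λ e he hhered).complex.X (m + 1 + 1)) :=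
      inferInstanceAs (Subsingleton PUnit)
    exact ModuleCat.isZero_of_subsingleton _

end
end
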